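/- arXiv:1910.13972 — 6 statements merged into one kernel-verified Lean document; each statement's English description precedes it below -/
import Mathlib

section
/- Let m = m(n) be a sequence of positive integers with m(n) → ∞ and m(n)/n → 0 as n → ∞, and fix a constant γ' < 1. Let X_1, …, X_n be i.i.d. standard Gaussian random vectors in ℝ^m. Then the probability that the discrepancy D(X_1, …, X_n) is at least γ'·√(πn/2)·2^{-n/m} tends to 1 as n → ∞. -/
open MeasureTheory ProbabilityTheory Filter
open Real
open scoped NNReal ENNReal


section Aux

lemma gauss_pdf_mul (v w : ℝ≥0) (hv : 0 < (v:ℝ)) (hw : 0 < (w:ℝ)) (z x : ℝ) :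
    gaussianPDFReal 0 v x * gaussianPDFReal 0 w (z - x)
      = (gaussianPDFReal 0 (v + w) z * (Real.sqrt (2 * π * ((v:ℝ) * w / ((v:ℝ) + w))))⁻¹) *
          Real.exp (-((((v:ℝ) + w) / (2 * (v:ℝ) * w)) * (x - (v:ℝ) * z / ((v:ℝ) + w)) ^ 2)) := by
  have hπ := Real.pi_pos
  have hvw : (0:ℝ) < (v:ℝ) + (w:ℝ) := by linarith
  simp only [gaussianPDFReal, sub_zero, NNReal.coe_add]
  have hnorm : (Real.sqrt (2 * π * (v:ℝ)))⁻¹ * (Real.sqrt (2 * π * (w:ℝ)))⁻¹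
      = (Real.sqrt (2 * π * ((v:ℝ) + w)))⁻¹
        * (Real.sqrt (2 * π * ((v:ℝ) * w / ((v:ℝ) + w))))⁻¹ := by
    rw [← mul_inv, ← mul_inv, ← Real.sqrt_mul (by positivity), ← Real.sqrt_mul (by positivity)]
    congr 1
    field_simp
  have hexp : Real.exp (-x ^ 2 / (2 * (v:ℝ))) * Real.exp (-(z - x) ^ 2 / (2 * (w:ℝ)))
      = Real.exp (-z ^ 2 / (2 * ((v:ℝ) + w)))
        * Real.exp (-((((v:ℝ) + w) / (2 * (v:ℝ) * w)) * (x - (v:ℝ) * z / ((v:ℝ) + w)) ^ 2)) := by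
    rw [← Real.exp_add, ← Real.exp_add]
    congr 1
    field_simp
    ring
  calc (Real.sqrt (2 * π * (v:ℝ)))⁻¹ * Real.exp (-x ^ 2 / (2 * (v:ℝ)))
      * ((Real.sqrt (2 * π * (w:ℝ)))⁻¹ * Real.exp (-(z - x) ^ 2 / (2 * (w:ℝ))))
      = ((Real.sqrt (2 * π * (v:ℝ)))⁻¹ * (Real.sqrt (2 * π * (w:ℝ)))⁻¹)
        * (Real.exp (-x ^ 2 / (2 * (v:ℝ))) * Real.exp (-(z - x) ^ 2 / (2 * (w:ℝ)))) := by ring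
    _ = _ := by rw [hnorm, hexp]; ring

lemma gauss_pdf_conv (v w : ℝ≥0) (hv : 0 < (v:ℝ)) (hw : 0 < (w:ℝ)) (z : ℝ) :
    ∫ x, gaussianPDFReal 0 v x * gaussianPDFReal 0 w (z - x)
      = gaussianPDFReal 0 (v + w) z := by
  have hπ := Real.pi_pos
  have hvw : (0:ℝ) < (v:ℝ) + (w:ℝ) := by linarith
  have ha : (0:ℝ) < ((v:ℝ) + w) / (2 * (v:ℝ) * w) := by positivity
  simp_rw [gauss_pdf_mul v w hv hw z]
  rw [integral_const_mul]
  have : ∫ x : ℝ, Real.exp (-((((v:ℝ) + w) / (2 * (v:ℝ) * w)) * (x - (v:ℝ) * z / ((v:ℝ) + w)) ^ 2))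
      = Real.sqrt (π / (((v:ℝ) + w) / (2 * (v:ℝ) * w))) := by
    have h := MeasureTheory.integral_sub_right_eq_self (μ := (volume : Measure ℝ))
      (fun x : ℝ => Real.exp (-(((v:ℝ) + w) / (2 * (v:ℝ) * w)) * x ^ 2))
      ((v:ℝ) * z / ((v:ℝ) + w))
    rw [integral_gaussian] at h
    simpa [neg_mul] using h
  rw [this]
  have : Real.sqrt (π / (((v:ℝ) + w) / (2 * (v:ℝ) * w)))
      = Real.sqrt (2 * π * ((v:ℝ) * w / ((v:ℝ) + w))) := by
    congr 1
    field_simp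
  rw [this, mul_assoc, inv_mul_cancel₀ (by positivity), mul_one]

lemma gauss_conv_integrable (v w : ℝ≥0) (hv : 0 < (v:ℝ)) (hw : 0 < (w:ℝ)) (z : ℝ) :
    Integrable (fun x => gaussianPDFReal 0 v x * gaussianPDFReal 0 w (z - x)) := by
  have hπ := Real.pi_pos
  have hvw : (0:ℝ) < (v:ℝ) + (w:ℝ) := by linarith
  have ha : (0:ℝ) < ((v:ℝ) + w) / (2 * (v:ℝ) * w) := by positivity
  simp_rw [gauss_pdf_mul v w hv hw z]
  have : Integrable (fun x : ℝ =>
      Real.exp (-((((v:ℝ) + w) / (2 * (v:ℝ) * w)) * (x - (v:ℝ) * z / ((v:ℝ) + w)) ^ 2))) := by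
    simpa [neg_mul] using (integrable_exp_neg_mul_sq ha).comp_sub_right ((v:ℝ) * z / ((v:ℝ) + w))
  exact this.const_mul _

end Aux

lemma gaussian_conv (v w : ℝ≥0) (hv : v ≠ 0) (hw : w ≠ 0) :
    Measure.map (fun p : ℝ × ℝ => p.1 + p.2)
      ((gaussianReal 0 v).prod (gaussianReal 0 w)) = gaussianReal 0 (v + w) := by
  have hv' : 0 < (v:ℝ) := by exact_mod_cast pos_iff_ne_zero.2 hv
  have hw' : 0 < (w:ℝ) := by exact_mod_cast pos_iff_ne_zero.2 hw
  ext s hs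
  rw [Measure.map_apply measurable_add hs, Measure.prod_apply (measurable_add hs)]
  have key : ∀ x : ℝ, (gaussianReal 0 w) (Prod.mk x ⁻¹' ((fun p : ℝ × ℝ => p.1 + p.2) ⁻¹' s))
      = ∫⁻ z, s.indicator (fun _ => (1:ℝ≥0∞)) z * gaussianPDF 0 w (z - x) := by
    intro x
    have h1 : Prod.mk x ⁻¹' ((fun p : ℝ × ℝ => p.1 + p.2) ⁻¹' s) = (fun y => x + y) ⁻¹' s := rfl
    rw [h1, gaussianReal_apply 0 hw, ← lintegral_indicator
      (f := gaussianPDF 0 w) ((measurable_const_add x) hs)]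
    have h2 : ∀ y : ℝ, ((fun y => x + y) ⁻¹' s).indicator (gaussianPDF 0 w) y
        = (fun z => s.indicator (fun _ => (1:ℝ≥0∞)) z * gaussianPDF 0 w (z - x)) (x + y) := by
      intro y
      by_cases h : x + y ∈ s <;> simp [Set.indicator, h, add_sub_cancel_left]
    rw [lintegral_congr h2, lintegral_add_left_eq_self
      (fun z => s.indicator (fun _ => (1:ℝ≥0∞)) z * gaussianPDF 0 w (z - x)) x]
  simp_rw [key]
  rw [gaussianReal_of_var_ne_zero 0 hv, lintegral_withDensity_eq_lintegral_mul volume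
    (measurable_gaussianPDF 0 v)]
  swap
  · apply Measurable.lintegral_prod_right (f := fun x z => s.indicator (fun _ => (1:ℝ≥0∞)) z * gaussianPDF 0 w (z - x))
    exact ((measurable_const.indicator hs).comp measurable_snd).mul
      ((measurable_gaussianPDF 0 w).comp (measurable_snd.sub measurable_fst))
  simp only [Pi.mul_apply]
  have swap1 : ∀ x : ℝ, gaussianPDF 0 v x * ∫⁻ z, s.indicator (fun _ => (1:ℝ≥0∞)) z * gaussianPDF 0 w (z - x)
      = ∫⁻ z, gaussianPDF 0 v x * (s.indicator (fun _ => (1:ℝ≥0∞)) z * gaussianPDF 0 w (z - x)) := by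
    intro x
    exact (lintegral_const_mul _ ((measurable_const.indicator hs).mul
      ((measurable_gaussianPDF 0 w).comp (measurable_id.sub measurable_const)))).symm
  simp_rw [swap1]
  rw [lintegral_lintegral_swap]
  swap
  · apply Measurable.aemeasurable
    exact ((measurable_gaussianPDF 0 v).comp measurable_fst).mul
      (((measurable_const.indicator hs).comp measurable_snd).mul
        ((measurable_gaussianPDF 0 w).comp (measurable_snd.sub measurable_fst)))
  have swap2 : ∀ z : ℝ, (∫⁻ x, gaussianPDF 0 v x * (s.indicator (fun _ => (1:ℝ≥0∞)) z * gaussianPDF 0 w (z - x)))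
      = s.indicator (fun _ => (1:ℝ≥0∞)) z * ∫⁻ x, gaussianPDF 0 v x * gaussianPDF 0 w (z - x) := by
    intro z
    rw [← lintegral_const_mul (f := fun x => gaussianPDF 0 v x * gaussianPDF 0 w (z - x)) _
      ((measurable_gaussianPDF 0 v).mul
        ((measurable_gaussianPDF 0 w).comp (measurable_const.sub measurable_id)))]
    exact lintegral_congr fun x => by ring
  simp_rw [swap2]
  have hconv : ∀ z : ℝ, (∫⁻ x, gaussianPDF 0 v x * gaussianPDF 0 w (z - x))
      = gaussianPDF 0 (v + w) z := by
    intro z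
    simp only [gaussianPDF]
    simp_rw [← ENNReal.ofReal_mul (gaussianPDFReal_nonneg 0 v _)]
    rw [← MeasureTheory.ofReal_integral_eq_lintegral_ofReal (gauss_conv_integrable v w hv' hw' z)
      (ae_of_all _ fun x => mul_nonneg (gaussianPDFReal_nonneg 0 v x) (gaussianPDFReal_nonneg 0 w _)),
      gauss_pdf_conv v w hv' hw' z]
  simp_rw [hconv]
  have h3 : ∀ z : ℝ, s.indicator (fun _ => (1:ℝ≥0∞)) z * gaussianPDF 0 (v + w) z
      = s.indicator (gaussianPDF 0 (v + w)) z := by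
    intro z
    by_cases h : z ∈ s <;> simp [Set.indicator, h]
  simp_rw [h3]
  rw [lintegral_indicator hs, ← gaussianReal_apply 0 (by positivity) s]



section Aux2
lemma pi_gaussian_conv (k : ℕ) (v w : ℝ≥0) (hv : v ≠ 0) (hw : w ≠ 0) :
    Measure.map (fun p : (Fin k → ℝ) × (Fin k → ℝ) => p.1 + p.2)
      ((Measure.pi fun _ : Fin k => gaussianReal 0 v).prod
        (Measure.pi fun _ : Fin k => gaussianReal 0 w))
      = Measure.pi fun _ : Fin k => gaussianReal 0 (v + w) := by
  have hE := measurePreserving_arrowProdEquivProdArrow ℝ ℝ (Fin k)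
    (fun _ => gaussianReal 0 v) (fun _ => gaussianReal 0 w)
  rw [← hE.map_eq, Measure.map_map measurable_add hE.measurable]
  have hcomp : ((fun p : (Fin k → ℝ) × (Fin k → ℝ) => p.1 + p.2)
      ∘ (MeasurableEquiv.arrowProdEquivProdArrow ℝ ℝ (Fin k)))
      = fun (h : Fin k → ℝ × ℝ) (j : Fin k) => (fun p : ℝ × ℝ => p.1 + p.2) (h j) := by
    funext h
    rfl
  rw [hcomp]
  exact (measurePreserving_pi _ _ (fun _ => ⟨measurable_add, gaussian_conv v w hv hw⟩)).map_eq

lemma meas_sum_vec (n k : ℕ) : Measurable (fun x : Fin n → (Fin k → ℝ) => ∑ i, x i) :=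
  Finset.measurable_sum Finset.univ fun i _ => measurable_pi_apply i

lemma map_sum_pi (k : ℕ) : ∀ n : ℕ, n ≠ 0 →
    Measure.map (fun x : Fin n → (Fin k → ℝ) => ∑ i, x i)
      (Measure.pi fun _ : Fin n => Measure.pi fun _ : Fin k => gaussianReal 0 1)
      = Measure.pi fun _ : Fin k => gaussianReal 0 (n : ℝ≥0) := by
  intro n
  induction n with
  | zero => intro h; exact absurd rfl h
  | succ n ih =>
    intro _
    rcases Nat.eq_zero_or_pos n with hn | hn
    · subst hn
      have h1 := measurePreserving_funUnique
        (μ := Measure.pi fun _ : Fin k => gaussianReal 0 1) (Fin 1)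
      have heq : (fun x : Fin 1 → (Fin k → ℝ) => ∑ i, x i)
          = ⇑(MeasurableEquiv.funUnique (Fin 1) (Fin k → ℝ)) := by
        funext x
        simp [MeasurableEquiv.funUnique, Fin.sum_univ_one]
      rw [heq]
      exact h1.map_eq.trans (by norm_num)
    · have h1 := measurePreserving_piFinSuccAbove
        (fun _ : Fin (n+1) => Measure.pi fun _ : Fin k => gaussianReal 0 1) 0
      have hcomp : (fun x : Fin (n+1) → (Fin k → ℝ) => ∑ i, x i)
          = (fun p : (Fin k → ℝ) × (Fin n → (Fin k → ℝ)) => p.1 + ∑ i, p.2 i)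
            ∘ ⇑(MeasurableEquiv.piFinSuccAbove (fun _ : Fin (n+1) => Fin k → ℝ) 0) := by
        funext x
        simp [MeasurableEquiv.piFinSuccAbove, Fin.insertNthEquiv, Fin.sum_univ_succ,
          Fin.removeNth, Fin.succAbove_zero, Fin.tail]
      have hmeas1 : Measurable (fun p : (Fin k → ℝ) × (Fin n → (Fin k → ℝ)) => p.1 + ∑ i, p.2 i) :=
        measurable_fst.add ((meas_sum_vec n k).comp measurable_snd)
      rw [hcomp, ← Measure.map_map hmeas1 h1.measurable, h1.map_eq]
      have hcomp2 : (fun p : (Fin k → ℝ) × (Fin n → (Fin k → ℝ)) => p.1 + ∑ i, p.2 i)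
          = (fun q : (Fin k → ℝ) × (Fin k → ℝ) => q.1 + q.2)
            ∘ (Prod.map id (fun x : Fin n → (Fin k → ℝ) => ∑ i, x i)) := rfl
      rw [hcomp2, ← Measure.map_map measurable_add (measurable_id.prodMap (meas_sum_vec n k)),
        ← Measure.map_prod_map _ _ measurable_id (meas_sum_vec n k), Measure.map_id,
        ih hn.ne', pi_gaussian_conv k 1 n one_ne_zero (by exact_mod_cast hn.ne')]
      congr 1
      push_cast
      rw [add_comm]

lemma map_signs_pi (n k : ℕ) (c : Fin n → ℝ) (hc : ∀ i, c i = 1 ∨ c i = -1) :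
    Measure.map (fun (x : Fin n → (Fin k → ℝ)) (i : Fin n) => c i • x i)
      (Measure.pi fun _ : Fin n => Measure.pi fun _ : Fin k => gaussianReal 0 1)
      = Measure.pi fun _ : Fin n => Measure.pi fun _ : Fin k => gaussianReal 0 1 := by
  have hscalar : ∀ i : Fin n, MeasurePreserving (fun y : ℝ => c i * y)
      (gaussianReal 0 1) (gaussianReal 0 1) := by
    intro i
    refine ⟨measurable_const_mul _, ?_⟩
    have h := gaussianReal_map_const_mul (μ := 0) (v := 1) (c i)
    rcases hc i with h1 | h1 <;> rw [h1] at h <;>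
      · rw [show ((fun y : ℝ => c i * y)) = ((c i) * ·) from rfl, h1, h]
        norm_num
  have hvec : ∀ i : Fin n, MeasurePreserving (fun u : Fin k → ℝ => c i • u)
      (Measure.pi fun _ : Fin k => gaussianReal 0 1)
      (Measure.pi fun _ : Fin k => gaussianReal 0 1) := by
    intro i
    have := measurePreserving_pi (fun _ : Fin k => gaussianReal 0 1)
      (fun _ : Fin k => gaussianReal 0 1) (f := fun _ y => c i * y) (fun _ => hscalar i)
    convert this using 1
    rfl
  exact (measurePreserving_pi _ _ hvec).map_eq

lemma map_signed_sum (n k : ℕ) (hn : n ≠ 0) (c : Fin n → ℝ) (hc : ∀ i, c i = 1 ∨ c i = -1) :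
    Measure.map (fun x : Fin n → (Fin k → ℝ) => ∑ i, c i • x i)
      (Measure.pi fun _ : Fin n => Measure.pi fun _ : Fin k => gaussianReal 0 1)
      = Measure.pi fun _ : Fin k => gaussianReal 0 (n : ℝ≥0) := by
  have hcomp : (fun x : Fin n → (Fin k → ℝ) => ∑ i, c i • x i)
      = (fun x : Fin n → (Fin k → ℝ) => ∑ i, x i)
        ∘ (fun (x : Fin n → (Fin k → ℝ)) (i : Fin n) => c i • x i) := rfl
  have hmeas : Measurable (fun (x : Fin n → (Fin k → ℝ)) (i : Fin n) => c i • x i) :=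
    measurable_pi_lambda _ fun i => (measurable_const_smul (c i)).comp (measurable_pi_apply i)
  rw [hcomp, ← Measure.map_map (meas_sum_vec n k) hmeas, map_signs_pi n k c hc,
    map_sum_pi k n hn]

end Aux2



section Aux3

lemma aemeasurable_pi_family {ι Ω : Type*} [Countable ι] [MeasurableSpace Ω]
    {β : ι → Type*} [∀ i, MeasurableSpace (β i)] {μ : Measure Ω}
    {f : ∀ i, Ω → β i} (h : ∀ i, AEMeasurable (f i) μ) :
    AEMeasurable (fun ω i => f i ω) μ := by
  choose g hg hfg using h
  refine ⟨fun ω i => g i ω, measurable_pi_lambda _ hg, ?_⟩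
  filter_upwards [MeasureTheory.ae_all_iff.2 hfg] with ω hω
  funext i
  exact hω i

lemma joint_law {Ω : Type*} [MeasurableSpace Ω] (P : Measure Ω) [IsProbabilityMeasure P]
    (n k : ℕ) (X : Fin n → Ω → (Fin k → ℝ))
    (hindep : iIndepFun X P)
    (hlaw : ∀ i, Measure.map (X i) P = Measure.pi fun _ : Fin k => gaussianReal 0 1) :
    Measure.map (fun ω i => X i ω) P
      = Measure.pi fun _ : Fin n => Measure.pi fun _ : Fin k => gaussianReal 0 1 := by
  have hae : ∀ i, AEMeasurable (X i) P := by
    intro i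
    by_contra h
    have := Measure.map_of_not_aemeasurable h
    rw [hlaw i] at this
    exact (IsProbabilityMeasure.ne_zero _) this
  have hjoint : AEMeasurable (fun ω i => X i ω) P := aemeasurable_pi_family hae
  refine (Measure.pi_eq fun s hs => ?_).symm
  rw [Measure.map_apply_of_aemeasurable hjoint (MeasurableSet.univ_pi hs)]
  have hpre : (fun ω i => X i ω) ⁻¹' Set.pi Set.univ s = ⋂ i, X i ⁻¹' s i := by
    ext ω
    simp [Set.mem_pi]
  rw [hpre, hindep.meas_iInter fun i => ⟨s i, hs i, rfl⟩]
  exact Finset.prod_congr rfl fun i _ => by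
    rw [← Measure.map_apply_of_aemeasurable (hae i) (hs i), hlaw i]

lemma gauss_ball_le (v : ℝ≥0) (hv : v ≠ 0) (t : ℝ) :
    gaussianReal 0 v (Metric.ball 0 t) ≤ ENNReal.ofReal ((Real.sqrt (2 * π * v))⁻¹ * (2 * t)) := by
  have hπ := Real.pi_pos
  have hv' : 0 < (v:ℝ) := by exact_mod_cast pos_iff_ne_zero.2 hv
  rw [gaussianReal_apply 0 hv, Real.ball_eq_Ioo]
  calc ∫⁻ x in Set.Ioo (0 - t) (0 + t), gaussianPDF 0 v x
      ≤ ∫⁻ _ in Set.Ioo (0 - t) (0 + t), ENNReal.ofReal ((Real.sqrt (2 * π * v))⁻¹) := by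
        refine setLIntegral_mono measurable_const fun x _ => ?_
        rw [gaussianPDF]
        refine ENNReal.ofReal_le_ofReal ?_
        rw [gaussianPDFReal]
        calc (Real.sqrt (2 * π * v))⁻¹ * Real.exp (-(x - 0) ^ 2 / (2 * v))
            ≤ (Real.sqrt (2 * π * v))⁻¹ * 1 := by
              refine mul_le_mul_of_nonneg_left ?_ (by positivity)
              rw [Real.exp_le_one_iff]
              have : (0:ℝ) ≤ (x - 0) ^ 2 := sq_nonneg _
              have h2v : (0:ℝ) < 2 * v := by linarith
              exact div_nonpos_iff.2 (Or.inr ⟨by linarith, le_of_lt h2v⟩)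
          _ = (Real.sqrt (2 * π * v))⁻¹ := mul_one _
    _ = ENNReal.ofReal ((Real.sqrt (2 * π * v))⁻¹) * volume (Set.Ioo (0 - t) (0 + t)) := by
        rw [setLIntegral_const]
    _ ≤ ENNReal.ofReal ((Real.sqrt (2 * π * v))⁻¹ * (2 * t)) := by
        rw [Real.volume_Ioo, show (0:ℝ) + t - (0 - t) = 2 * t by ring, ← ENNReal.ofReal_mul
          (by positivity)]

end Aux3



lemma key_bound {Ω : Type} [MeasurableSpace Ω] (P : Measure Ω) [IsProbabilityMeasure P]
    (n k : ℕ) (hn : 1 ≤ n) (hk : 1 ≤ k)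
    (X : Fin n → Ω → (Fin k → ℝ))
    (hindep : iIndepFun X P)
    (hlaw : ∀ i, Measure.map (X i) P = Measure.pi fun _ : Fin k => gaussianReal 0 1)
    (γ' : ℝ) (hγ0 : 0 < γ') :
    1 - γ' ^ k ≤ (P {ω | (⨅ σ : Fin n → Bool,
        ‖∑ i, (if σ i then (1:ℝ) else -1) • X i ω‖)
      ≥ γ' * Real.sqrt (Real.pi * n / 2) * (2:ℝ) ^ (-(n:ℝ) / (k:ℝ))}).toReal := by
  have hπ := Real.pi_pos
  have hn' : (0:ℝ) < (n:ℝ) := by exact_mod_cast hn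
  have hk' : (0:ℝ) < (k:ℝ) := by exact_mod_cast hk
  set t : ℝ := γ' * Real.sqrt (Real.pi * n / 2) * (2:ℝ) ^ (-(n:ℝ) / (k:ℝ)) with ht_def
  have hs : 0 < Real.sqrt (Real.pi * n / 2) := Real.sqrt_pos.2 (by positivity)
  have ht : 0 < t := by positivity
  set c : (Fin n → Bool) → Fin n → ℝ := fun σ i => if σ i then (1:ℝ) else -1 with hc_def
  have hc : ∀ σ i, c σ i = 1 ∨ c σ i = -1 := by
    intro σ i
    by_cases h : σ i <;> simp [hc_def, h]
  set T : (Fin n → Bool) → (Fin n → (Fin k → ℝ)) → (Fin k → ℝ) :=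
    fun σ x => ∑ i, c σ i • x i with hT_def
  have hmeasT : ∀ σ, Measurable (T σ) := fun σ =>
    Finset.measurable_sum Finset.univ fun i _ =>
      (measurable_const_smul (c σ i)).comp (measurable_pi_apply i)
  set πμ : Measure (Fin n → (Fin k → ℝ)) :=
    Measure.pi fun _ : Fin n => Measure.pi fun _ : Fin k => gaussianReal 0 1 with hπμ_def
  set C : Set (Fin n → (Fin k → ℝ)) := ⋃ σ, T σ ⁻¹' Metric.ball 0 t with hC_def
  have hCmeas : MeasurableSet C :=
    MeasurableSet.iUnion fun σ => (hmeasT σ) measurableSet_ball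
  -- rewrite the event
  have hae : ∀ i, AEMeasurable (X i) P := by
    intro i
    by_contra h
    have h2 := Measure.map_of_not_aemeasurable h
    rw [hlaw i] at h2
    exact (IsProbabilityMeasure.ne_zero _) h2
  have hjoint : AEMeasurable (fun ω i => X i ω) P := by
    choose g hg hfg using hae
    refine ⟨fun ω i => g i ω, measurable_pi_lambda _ hg, ?_⟩
    filter_upwards [MeasureTheory.ae_all_iff.2 hfg] with ω hω
    funext i
    exact hω i
  have hev : {ω | (⨅ σ : Fin n → Bool, ‖∑ i, (if σ i then (1:ℝ) else -1) • X i ω‖) ≥ t}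
      = (fun ω i => X i ω) ⁻¹' Cᶜ := by
    ext ω
    simp only [Set.mem_setOf_eq, Set.mem_preimage, Set.mem_compl_iff, hC_def, Set.mem_iUnion,
      Set.mem_preimage, mem_ball_zero_iff, hT_def, not_exists, not_lt, ge_iff_le]
    constructor
    · intro h σ
      exact le_trans h (ciInf_le (Finite.bddBelow_range _) σ)
    · intro h
      exact le_ciInf h
  rw [hev, ← Measure.map_apply_of_aemeasurable hjoint hCmeas.compl,
    joint_law P n k X hindep hlaw, ← hπμ_def]
  -- bound the union
  have hBσ : ∀ σ, πμ (T σ ⁻¹' Metric.ball 0 t) ≤ ENNReal.ofReal (γ' ^ k * (2:ℝ) ^ (-(n:ℝ))) := by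
    intro σ
    rw [← Measure.map_apply (hmeasT σ) measurableSet_ball,
      map_signed_sum n k (by omega) (c σ) (hc σ),
      Measure.pi_ball _ _ ht]
    have hzero : ∀ j : Fin k, (0 : Fin k → ℝ) j = (0:ℝ) := fun _ => rfl
    calc ∏ j : Fin k, gaussianReal 0 (n:ℝ≥0) (Metric.ball ((0 : Fin k → ℝ) j) t)
        ≤ ∏ _j : Fin k, ENNReal.ofReal (γ' * (2:ℝ) ^ (-(n:ℝ) / (k:ℝ))) := by
          refine Finset.prod_le_prod' fun j _ => ?_
          rw [hzero j]
          refine le_trans (gauss_ball_le (n:ℝ≥0) (by exact_mod_cast hn'.ne') t) ?_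
          refine le_of_eq (congrArg _ ?_)
          have h4 : Real.sqrt (2 * π * ((n:ℝ≥0):ℝ)) = 2 * Real.sqrt (Real.pi * n / 2) := by
            rw [show 2 * π * ((n:ℝ≥0):ℝ) = 2^2 * (Real.pi * (n:ℝ) / 2) by push_cast; ring,
              Real.sqrt_mul (by norm_num), Real.sqrt_sq (by norm_num)]
          rw [h4, ht_def]
          field_simp
      _ = ENNReal.ofReal (γ' ^ k * (2:ℝ) ^ (-(n:ℝ))) := by
          rw [Finset.prod_const, Finset.card_univ, Fintype.card_fin,
            ← ENNReal.ofReal_pow (by positivity), mul_pow,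
            ← Real.rpow_natCast ((2:ℝ) ^ (-(n:ℝ) / (k:ℝ))) k,
            ← Real.rpow_mul (by norm_num : (0:ℝ) ≤ 2),
            div_mul_cancel₀ _ hk'.ne']
  have hCbound : πμ C ≤ ENNReal.ofReal (γ' ^ k) := by
    calc πμ C ≤ ∑' σ : Fin n → Bool, πμ (T σ ⁻¹' Metric.ball 0 t) := measure_iUnion_le _
      _ ≤ ∑' _σ : Fin n → Bool, ENNReal.ofReal (γ' ^ k * (2:ℝ) ^ (-(n:ℝ))) := by
          exact ENNReal.tsum_le_tsum hBσ
      _ = (Fintype.card (Fin n → Bool)) * ENNReal.ofReal (γ' ^ k * (2:ℝ) ^ (-(n:ℝ))) := by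
          rw [tsum_fintype, Finset.sum_const, Finset.card_univ, nsmul_eq_mul]
      _ = ENNReal.ofReal ((2:ℝ) ^ n * (γ' ^ k * (2:ℝ) ^ (-(n:ℝ)))) := by
          rw [Fintype.card_fun, Fintype.card_bool, Fintype.card_fin,
            ← ENNReal.ofReal_natCast (2^n), ← ENNReal.ofReal_mul (by positivity)]
          congr 1
          push_cast
          ring
      _ = ENNReal.ofReal (γ' ^ k) := by
          congr 1
          rw [← Real.rpow_natCast 2 n, mul_comm, mul_assoc,
            ← Real.rpow_add (by norm_num : (0:ℝ) < 2)]
          simp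
  have h2 : (πμ C).toReal ≤ γ' ^ k :=
    ENNReal.toReal_le_of_le_ofReal (by positivity) hCbound
  have h3 : πμ Cᶜ = 1 - πμ C := by
    rw [measure_compl hCmeas (measure_ne_top _ _), measure_univ]
  rw [h3, ENNReal.toReal_sub_of_le prob_le_one ENNReal.one_ne_top, ENNReal.toReal_one]
  linarith

/-- **Statement 0.** If `m = m(n) → ∞`, `m(n)/n → 0`, and `γ > 1`, then for i.i.d. standard
Gaussian vectors `X_1, …, X_n` in `ℝ^m`, the probability that the discrepancy
`min_{σ ∈ {±1}^n} ‖∑ σ_i X_i‖_∞` is at least `γ' √(πn/2) 2^{-n/m}` tends to `1`. -/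
theorem gaussian_discrepancy_lower_bound
    (m : ℕ → ℕ) (hm_pos : ∀ n, 0 < m n)
    (hm_top : Tendsto m atTop atTop)
    (hm_sub : Tendsto (fun n => (m n : ℝ) / (n : ℝ)) atTop (nhds 0))
    (γ' : ℝ) (hγ' : γ' < 1)
    (Ω : ℕ → Type) (mΩ : ∀ n, MeasurableSpace (Ω n))
    (P : ∀ n, Measure (Ω n)) (hP : ∀ n, IsProbabilityMeasure (P n))
    (X : ∀ n, Fin n → Ω n → (Fin (m n) → ℝ))
    (hX_indep : ∀ n, iIndepFun (X n) (P n))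
    (hX_law : ∀ n i, Measure.map (X n i) (P n)
      = Measure.pi (fun _ : Fin (m n) => gaussianReal 0 1)) :
    Tendsto
      (fun n => ((P n) {ω | (⨅ σ : Fin n → Bool,
          ‖∑ i, (if σ i then (1 : ℝ) else -1) • X n i ω‖)
        ≥ γ' * Real.sqrt (Real.pi * n / 2) * (2 : ℝ) ^ (-(n : ℝ) / (m n : ℝ))}).toReal)
      atTop (nhds 1) := by
  rcases le_or_gt γ' 0 with hγ0 | hγ0
  · refine Tendsto.congr (f₁ := fun _ => (1:ℝ)) (fun n => ?_) tendsto_const_nhds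
    haveI := hP n
    have huniv : {ω | (⨅ σ : Fin n → Bool,
          ‖∑ i, (if σ i then (1 : ℝ) else -1) • X n i ω‖)
        ≥ γ' * Real.sqrt (Real.pi * n / 2) * (2 : ℝ) ^ (-(n : ℝ) / (m n : ℝ))}
        = Set.univ := by
      ext ω
      simp only [Set.mem_setOf_eq, Set.mem_univ, iff_true, ge_iff_le]
      have h1 : γ' * Real.sqrt (Real.pi * n / 2) * (2:ℝ) ^ (-(n:ℝ) / (m n : ℝ)) ≤ 0 := by
        have h2 : γ' * Real.sqrt (Real.pi * n / 2) ≤ 0 :=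
          mul_nonpos_iff.2 (Or.inr ⟨hγ0, Real.sqrt_nonneg _⟩)
        exact mul_nonpos_iff.2 (Or.inr ⟨h2, by positivity⟩)
      exact le_trans h1 (le_ciInf fun σ => norm_nonneg _)
    rw [huniv, measure_univ, ENNReal.toReal_one]
  · have h0 : Tendsto (fun n => γ' ^ (m n)) atTop (nhds 0) :=
      (tendsto_pow_atTop_nhds_zero_of_lt_one hγ0.le hγ').comp hm_top
    have h1 : Tendsto (fun n => 1 - γ' ^ (m n)) atTop (nhds 1) := by
      have := tendsto_const_nhds (x := (1:ℝ)) (f := atTop (α := ℕ)) |>.sub h0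
      simpa using this
    refine tendsto_of_tendsto_of_tendsto_of_le_of_le' h1 tendsto_const_nhds ?_ ?_
    · filter_upwards [eventually_ge_atTop 1] with n hn
      haveI := hP n
      exact @key_bound (Ω n) (mΩ n) (P n) (hP n) n (m n) hn (hm_pos n) (X n)
        (hX_indep n) (hX_law n) γ' hγ0
    · refine Eventually.of_forall fun n => ?_
      haveI := hP n
      refine ENNReal.toReal_le_of_le_ofReal zero_le_one ?_
      rw [ENNReal.ofReal_one]
      exact prob_le_one
end

section
/- Let m = m(n) be a sequence of positive integers with m(n)/n → 0 as n → ∞, fix γ > 1, and set ε = γ·2^{-n/m}·√(πn/2). Define L = 2^n·Σ_{k=⌈n/4⌉}^{⌊3n/4⌋} C(n,k)·P_{ρ_k}( |√n·X| ≤ ε and |√n·Y| ≤ ε )^m, where ρ_k = 1 − 2k/n. Then L ≤ (1 + o(1))·(2^n·P(|Z| ≤ ε/√n)^m)² as n → ∞. -/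
open MeasureTheory ProbabilityTheory Filter
open Real

/-- `∫ exp(-x²/2 + bx) = √(2π) exp(b²/2)` -/
lemma integral_exp_quad (b : ℝ) :
    ∫ x : ℝ, Real.exp (-x^2/2 + b*x) = Real.sqrt (2*Real.pi) * Real.exp (b^2/2) := by
  have h : ∀ x : ℝ, Real.exp (-x^2/2 + b*x)
      = Real.exp (b^2/2) * Real.exp (-(1/2) * (x + -b)^2) := by
    intro x
    rw [← Real.exp_add]
    ring_nf
  simp_rw [h]
  rw [MeasureTheory.integral_const_mul,
    MeasureTheory.integral_add_right_eq_self (fun x => Real.exp (-(1/2) * x^2)) (-b),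
    integral_gaussian]
  rw [mul_comm]
  norm_num [mul_comm]

lemma integrable_exp_quad (b : ℝ) :
    Integrable (fun x : ℝ => Real.exp (-x^2/2 + b*x)) := by
  have h : (fun x : ℝ => Real.exp (-x^2/2 + b*x))
      = fun x : ℝ => Real.exp (b^2/2) * Real.exp (-(1/2) * (x - b)^2) := by
    funext x
    rw [← Real.exp_add]
    ring_nf
  rw [h]
  exact ((integrable_exp_neg_mul_sq (by norm_num : (0:ℝ) < 1/2)).comp_sub_right b).const_mul _

/-- Binomial MGF bound. -/
lemma binom_mgf (n : ℕ) (hn : 1 ≤ n) (a : ℝ) (ha : 0 ≤ a) (ha' : a ≤ (n:ℝ)/4) :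
    ∑ k ∈ Finset.range (n+1), (n.choose k : ℝ) * Real.exp (a * (1 - 2*(k:ℝ)/(n:ℝ))^2)
      ≤ 2^n * (1 + 2*a/(n:ℝ)) := by
  have hn0 : (0:ℝ) < n := by exact_mod_cast hn
  set s : ℝ := Real.sqrt (2*a) with hs
  have hs2 : s^2 = 2*a := Real.sq_sqrt (by linarith)
  -- step 1: each exp as an integral
  have hterm : ∀ k : ℕ, Real.exp (a * (1 - 2*(k:ℝ)/(n:ℝ))^2)
      = (Real.sqrt (2*Real.pi))⁻¹ * ∫ x : ℝ, Real.exp (-x^2/2 + (s * (1 - 2*(k:ℝ)/(n:ℝ))) * x) := by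
    intro k
    rw [integral_exp_quad]
    rw [mul_pow, hs2]
    rw [← mul_assoc, inv_mul_cancel₀ (by positivity : Real.sqrt (2*Real.pi) ≠ 0)]
    ring_nf
  simp_rw [hterm]
  -- step 2: pull out sum into integral
  have hswap : ∑ k ∈ Finset.range (n+1), (n.choose k : ℝ) *
      ((Real.sqrt (2*Real.pi))⁻¹ * ∫ x : ℝ, Real.exp (-x^2/2 + (s * (1 - 2*(k:ℝ)/(n:ℝ))) * x))
      = (Real.sqrt (2*Real.pi))⁻¹ * ∫ x : ℝ, ∑ k ∈ Finset.range (n+1),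
          (n.choose k : ℝ) * Real.exp (-x^2/2 + (s * (1 - 2*(k:ℝ)/(n:ℝ))) * x) := by
    rw [MeasureTheory.integral_finset_sum]
    · rw [Finset.mul_sum]
      refine Finset.sum_congr rfl fun k _ => ?_
      rw [MeasureTheory.integral_const_mul]
      ring
    · exact fun k _ => (integrable_exp_quad _).const_mul _
  rw [hswap]
  -- step 3: inner sum equals exp(-x²/2) * (e^{-λ}+e^{λ})^n  with λ = s x / n, bound it
  have hbound : ∀ x : ℝ, ∑ k ∈ Finset.range (n+1),
      (n.choose k : ℝ) * Real.exp (-x^2/2 + (s * (1 - 2*(k:ℝ)/(n:ℝ))) * x)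
      ≤ 2^n * Real.exp (-(1/2 - a/(n:ℝ)) * x^2) := by
    intro x
    set lam : ℝ := s * x / n with hlam
    have hk : ∀ k ∈ Finset.range (n+1), (n.choose k : ℝ) * Real.exp (-x^2/2 + (s * (1 - 2*(k:ℝ)/(n:ℝ))) * x)
        = Real.exp (-x^2/2) * (Real.exp (-lam) ^ k * Real.exp lam ^ (n - k) * (n.choose k : ℝ)) := by
      intro k hk
      have hkn : k ≤ n := by simpa using Nat.lt_succ_iff.mp (Finset.mem_range.mp hk)
      rw [← Real.exp_nat_mul, ← Real.exp_nat_mul, ← Real.exp_add]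
      have hcast : ((n - k : ℕ) : ℝ) = (n:ℝ) - k := by
        push_cast [Nat.cast_sub hkn]; ring
      rw [hcast]
      have : -x^2/2 + (s * (1 - 2*(k:ℝ)/(n:ℝ))) * x
          = -x^2/2 + ((k:ℝ) * -lam + ((n:ℝ) - k) * lam) := by
        rw [hlam]; field_simp
        ring
      rw [this, Real.exp_add]
      ring
    rw [Finset.sum_congr rfl hk, ← Finset.mul_sum, ← add_pow]
    have hch : Real.exp (-lam) + Real.exp lam ≤ 2 * Real.exp (lam^2/2) := by
      have := Real.cosh_le_exp_half_sq lam
      rw [Real.cosh_eq] at this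
      linarith
    have h1 : (Real.exp (-lam) + Real.exp lam)^n ≤ (2 * Real.exp (lam^2/2))^n :=
      pow_le_pow_left₀ (by positivity) hch n
    calc Real.exp (-x^2/2) * (Real.exp (-lam) + Real.exp lam)^n
        ≤ Real.exp (-x^2/2) * (2 * Real.exp (lam^2/2))^n := by
          exact mul_le_mul_of_nonneg_left h1 (le_of_lt (Real.exp_pos _))
      _ = 2^n * Real.exp (-(1/2 - a/(n:ℝ)) * x^2) := by
          rw [mul_pow, ← Real.exp_nat_mul]
          have : -x^2/2 + (n:ℕ) * (lam^2/2) = -(1/2 - a/(n:ℝ)) * x^2 := by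
            have : lam^2 = 2*a*x^2/(n:ℝ)^2 := by
              rw [hlam]; rw [div_pow, mul_pow, hs2]
            rw [this]
            field_simp
            ring
          rw [← this, Real.exp_add]
          ring
  -- step 4: integrate the bound
  have hq : (0:ℝ) < 1/2 - a/(n:ℝ) := by
    have : a/(n:ℝ) ≤ 1/4 := by
      rw [div_le_iff₀ hn0]; linarith
    linarith
  have hint : (∫ x : ℝ, ∑ k ∈ Finset.range (n+1),
      (n.choose k : ℝ) * Real.exp (-x^2/2 + (s * (1 - 2*(k:ℝ)/(n:ℝ))) * x))
      ≤ ∫ x : ℝ, 2^n * Real.exp (-(1/2 - a/(n:ℝ)) * x^2) := by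
    refine MeasureTheory.integral_mono ?_ ?_ hbound
    · exact MeasureTheory.integrable_finset_sum _ fun k _ => (integrable_exp_quad _).const_mul _
    · exact (integrable_exp_neg_mul_sq hq).const_mul _
  rw [MeasureTheory.integral_const_mul, integral_gaussian] at hint
  -- step 5: conclude with sqrt algebra
  have hfinal : (Real.sqrt (2*Real.pi))⁻¹ * (2^n * Real.sqrt (Real.pi / (1/2 - a/(n:ℝ))))
      ≤ 2^n * (1 + 2*a/(n:ℝ)) := by
    set u : ℝ := 2*a/(n:ℝ) with hu
    have hu0 : 0 ≤ u := by positivity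
    have hu1 : u ≤ 1/2 := by
      rw [hu, div_le_iff₀ hn0]; linarith
    have hq2 : Real.pi / (1/2 - a/(n:ℝ)) = 2*Real.pi / (1 - u) := by
      rw [hu]
      rw [div_eq_div_iff (by linarith) (by nlinarith [hq, hn0])]
      field_simp
    rw [hq2]
    have h1u : (0:ℝ) < 1 - u := by linarith
    have hsu : (0:ℝ) < Real.sqrt (1 - u) := Real.sqrt_pos.mpr h1u
    have hs2pi : (0:ℝ) < Real.sqrt (2*Real.pi) := Real.sqrt_pos.mpr (by positivity)
    have hkey : Real.sqrt (1-u) * (1+u) ≥ 1 := by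
      have h1 : (1:ℝ) ≤ (1-u) * (1+u)^2 := by
        nlinarith [hu0, hu1, mul_nonneg hu0 hu0, mul_nonneg (mul_nonneg hu0 hu0) hu0]
      have h2 : (1:ℝ) ≤ Real.sqrt ((1-u) * (1+u)^2) := by
        have := Real.sqrt_le_sqrt h1
        rwa [Real.sqrt_one] at this
      rwa [Real.sqrt_mul h1u.le, Real.sqrt_sq (by linarith : (0:ℝ) ≤ 1+u)] at h2
    have hinv : (Real.sqrt (1-u))⁻¹ ≤ 1 + u := by
      rw [inv_eq_one_div, div_le_iff₀ hsu]
      linarith [hkey, mul_comm (Real.sqrt (1-u)) (1+u)]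
    have heq : (Real.sqrt (2*Real.pi))⁻¹ * (2^n * Real.sqrt (2*Real.pi / (1-u)))
        = 2^n * (Real.sqrt (1-u))⁻¹ := by
      rw [Real.sqrt_div (by positivity : (0:ℝ) ≤ 2*Real.pi)]
      field_simp
    rw [heq]
    have : (2:ℝ)^n * (Real.sqrt (1-u))⁻¹ ≤ 2^n * (1+u) := by
      exact mul_le_mul_of_nonneg_left hinv (by positivity)
    exact this
  calc (Real.sqrt (2*Real.pi))⁻¹ * ∫ x : ℝ, ∑ k ∈ Finset.range (n+1),
          (n.choose k : ℝ) * Real.exp (-x^2/2 + (s * (1 - 2*(k:ℝ)/(n:ℝ))) * x)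
      ≤ (Real.sqrt (2*Real.pi))⁻¹ * (2^n * Real.sqrt (Real.pi / (1/2 - a/(n:ℝ)))) := by
        exact mul_le_mul_of_nonneg_left hint (by positivity)
    _ ≤ 2^n * (1 + 2*a/(n:ℝ)) := hfinal

/-- exp A + exp B ≤ 2 exp((A+B)/2 + ((A-B)/2)²/2) -/
lemma exp_add_exp_le (A B : ℝ) :
    Real.exp A + Real.exp B ≤ 2 * Real.exp ((A+B)/2 + ((A-B)/2)^2/2) := by
  have h1 : Real.exp A + Real.exp B
      = 2 * Real.exp ((A+B)/2) * Real.cosh ((A-B)/2) := by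
    have eA : (A+B)/2 + (A-B)/2 = A := by ring
    have eB : (A+B)/2 + (-((A-B)/2)) = B := by ring
    rw [Real.cosh_eq, ← eA, ← eB, Real.exp_add, Real.exp_add]
    ring
  rw [h1, Real.exp_add]
  have h2 := Real.cosh_le_exp_half_sq ((A-B)/2)
  have h3 : (0:ℝ) < Real.exp ((A+B)/2) := Real.exp_pos _
  nlinarith [Real.exp_pos (((A-B)/2)^2/2)]

/-- Pointwise symmetrized density bound. -/
lemma pdf_sym_bound (ρ t θ z : ℝ) (hρ : ρ^2 ≤ 1/4) (ht : 0 ≤ t) (ht1 : t ≤ 1)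
    (hθ : θ^2 ≤ ρ^2 * t^2) (hz : z^2 ≤ t^2) (hv : (0:ℝ) ≤ 1 - ρ^2) :
    Real.exp (-(z-θ)^2/(2*(1-ρ^2))) + Real.exp (-(-z-θ)^2/(2*(1-ρ^2)))
      ≤ 2 * Real.exp (ρ^2*t^2 - z^2/2) := by
  set v : ℝ := 1 - ρ^2 with hvdef
  have hv34 : (3:ℝ)/4 ≤ v := by rw [hvdef]; linarith
  have hv1 : v ≤ 1 := by rw [hvdef]; nlinarith [sq_nonneg ρ]
  have hv0 : (0:ℝ) < v := by linarith
  set A : ℝ := -(z-θ)^2/(2*v) with hA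
  set B : ℝ := -(-z-θ)^2/(2*v) with hB
  have key := exp_add_exp_le A B
  have hAB : (A+B)/2 = -(z^2+θ^2)/(2*v) := by rw [hA, hB]; field_simp; ring
  have hABd : (A-B)/2 = z*θ/v := by rw [hA, hB]; field_simp; ring
  have hexp : (A+B)/2 + ((A-B)/2)^2/2 ≤ ρ^2*t^2 - z^2/2 := by
    rw [hAB, hABd]
    rw [div_add_div _ _ (by positivity : (2*v) ≠ 0) (by positivity : ((2:ℝ)) ≠ 0)]
    have hzθ : z^2*θ^2 ≤ ρ^2*t^2*t^2 := by
      calc z^2*θ^2 ≤ t^2*(ρ^2*t^2) := by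
            apply mul_le_mul hz hθ (sq_nonneg _) (sq_nonneg _)
        _ = ρ^2*t^2*t^2 := by ring
    have ht2 : t^2 ≤ 1 := by nlinarith
    -- goal: (-(z²+θ²)*2 + (zθ/v)² * (2v)) / (2v*2) ≤ ρ²t² - z²/2
    rw [div_le_iff₀ (by positivity : (0:ℝ) < 2*v*2)]
    have hexpand : (z*θ/v)^2 * (2*v) = 2*z^2*θ^2/v := by field_simp
    have hb : 2*z^2*θ^2/v ≤ (8/3)*(z^2*θ^2) := by
      rw [div_le_iff₀ hv0]; nlinarith [sq_nonneg (z*θ)]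
    nlinarith [sq_nonneg ρ, sq_nonneg t, sq_nonneg z, sq_nonneg θ,
      mul_le_mul_of_nonneg_left hv34 (sq_nonneg z),
      mul_nonneg (mul_nonneg (sq_nonneg ρ) (sq_nonneg t)) (sub_nonneg.mpr ht2),
      mul_le_mul_of_nonneg_right hv34 (sq_nonneg z)]
  calc Real.exp A + Real.exp B ≤ 2 * Real.exp ((A+B)/2 + ((A-B)/2)^2/2) := key
    _ ≤ 2 * Real.exp (ρ^2*t^2 - z^2/2) := by
        have := Real.exp_le_exp.mpr hexp; linarith

lemma abs_set_eq_Icc (t : ℝ) : {z : ℝ | |z| ≤ t} = Set.Icc (-t) t := by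
  ext z; simp [abs_le]

lemma continuous_gaussianPDFReal' (θ : ℝ) (v : NNReal) :
    Continuous (gaussianPDFReal θ v) := by
  unfold gaussianPDFReal
  fun_prop

/-- Section bound: the shifted/scaled Gaussian measure of the symmetric interval. -/
lemma section_bound (ρ t x : ℝ) (hρ : ρ^2 ≤ 1/4) (ht : 0 ≤ t) (ht1 : t ≤ 1) (hx : |x| ≤ t) :
    gaussianReal 0 1 {y : ℝ | |ρ*x + Real.sqrt (1-ρ^2) * y| ≤ t}
      ≤ ENNReal.ofReal ((Real.sqrt (1-ρ^2))⁻¹ * Real.exp (ρ^2*t^2))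
          * gaussianReal 0 1 {z : ℝ | |z| ≤ t} := by
  have hv : (0:ℝ) < 1 - ρ^2 := by linarith
  set c : ℝ := Real.sqrt (1-ρ^2) with hc
  have hc0 : 0 < c := Real.sqrt_pos.mpr hv
  have hc2 : c^2 = 1 - ρ^2 := Real.sq_sqrt hv.le
  have hsetm : MeasurableSet {z : ℝ | |z| ≤ t} := by
    rw [abs_set_eq_Icc]; exact measurableSet_Icc
  have hfm : Measurable (fun y : ℝ => ρ*x + c*y) :=
    (measurable_id.const_mul c).const_add (ρ*x)
  -- rewrite as a mapped measure
  have hpre : {y : ℝ | |ρ*x + c * y| ≤ t} = (fun y : ℝ => ρ*x + c*y) ⁻¹' {z : ℝ | |z| ≤ t} := rfl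
  rw [hpre, ← Measure.map_apply hfm hsetm]
  -- compute the mapped measure
  have hcomp : (fun y : ℝ => ρ*x + c*y) = (fun z : ℝ => ρ*x + z) ∘ (fun y : ℝ => c*y) := rfl
  have hmap : (gaussianReal 0 1).map (fun y : ℝ => ρ*x + c*y)
      = gaussianReal (ρ*x) (⟨c^2, sq_nonneg c⟩ * 1) := by
    rw [hcomp, ← Measure.map_map (by fun_prop : Measurable fun z : ℝ => ρ*x + z)
      (by fun_prop : Measurable fun y : ℝ => c*y)]
    rw [gaussianReal_map_const_mul c, gaussianReal_map_const_add (ρ*x)]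
    norm_num
    congr 1; ext; show c^2 = c^2 * 1; ring
  rw [hmap]
  set v1 : NNReal := ⟨c^2, sq_nonneg c⟩ * 1 with hv1
  have hv1c : (v1 : ℝ) = 1 - ρ^2 := by
    rw [hv1]; show c^2 * 1 = 1 - ρ^2; rw [hc2]; ring
  have hv1ne : v1 ≠ 0 := by
    intro h
    rw [h] at hv1c
    simp at hv1c
    linarith
  rw [gaussianReal_apply_eq_integral _ hv1ne, gaussianReal_apply_eq_integral _ one_ne_zero]
  set K : ℝ := (Real.sqrt (1-ρ^2))⁻¹ * Real.exp (ρ^2*t^2) with hK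
  have hK0 : 0 ≤ K := by positivity
  rw [← ENNReal.ofReal_mul hK0]
  apply ENNReal.ofReal_le_ofReal
  -- now a real integral inequality
  rw [abs_set_eq_Icc]
  rw [MeasureTheory.integral_Icc_eq_integral_Ioc, MeasureTheory.integral_Icc_eq_integral_Ioc,
    ← intervalIntegral.integral_of_le (by linarith : -t ≤ t),
    ← intervalIntegral.integral_of_le (by linarith : -t ≤ t)]
  set f : ℝ → ℝ := gaussianPDFReal (ρ*x) v1 with hf
  have hfc : Continuous f := continuous_gaussianPDFReal' _ _
  have hfi : IntervalIntegrable f volume (-t) t := hfc.intervalIntegrable _ _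
  have hfni : IntervalIntegrable (fun z => f (-z)) volume (-t) t :=
    (hfc.comp continuous_neg).intervalIntegrable _ _
  have hsym : ∫ z in (-t)..t, f z = ∫ z in (-t)..t, (f z + f (-z))/2 := by
    have h1 : ∫ z in (-t)..t, f (-z) = ∫ z in (-t)..t, f z := by
      rw [intervalIntegral.integral_comp_neg f]
      norm_num
    rw [intervalIntegral.integral_div, intervalIntegral.integral_add hfi hfni, h1]
    ring
  rw [hsym]
  have hmono : ∫ z in (-t)..t, (f z + f (-z))/2 ≤ ∫ z in (-t)..t, K * gaussianPDFReal 0 1 z := by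
    apply intervalIntegral.integral_mono_on (by linarith)
    · exact (hfi.add hfni).div_const 2
    · exact ((continuous_gaussianPDFReal' 0 1).intervalIntegrable _ _).const_mul K
    · intro z hz
      have hz2 : z^2 ≤ t^2 := by
        rcases hz with ⟨h1, h2⟩
        nlinarith
      have hθ2 : (ρ*x)^2 ≤ ρ^2*t^2 := by
        have : x^2 ≤ t^2 := by
          have := abs_nonneg x
          nlinarith [abs_le.mp hx, sq_abs x]
        nlinarith [sq_nonneg ρ]
      have hkey := pdf_sym_bound ρ t (ρ*x) z hρ ht ht1 hθ2 hz2 hv.le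
      rw [hf]
      unfold gaussianPDFReal
      rw [hv1c]
      have hsq : Real.sqrt (2*Real.pi*(1-ρ^2)) = Real.sqrt (2*Real.pi) * c := by
        rw [hc, ← Real.sqrt_mul (by positivity)]
      have hsq1 : Real.sqrt (2*Real.pi*(1:NNReal)) = Real.sqrt (2*Real.pi) := by
        norm_num
      rw [hsq, hsq1, hK, hc]
      have hpos : (0:ℝ) < Real.sqrt (2*Real.pi) := Real.sqrt_pos.mpr (by positivity)
      have e1 : Real.exp (ρ^2*t^2 - z^2/2) = Real.exp (ρ^2*t^2) * Real.exp (-z^2/2) := by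
        rw [← Real.exp_add]; ring_nf
      -- clear denominators and use hkey
      rw [mul_inv]
      have goal_eq : ((Real.sqrt (2*Real.pi))⁻¹ * c⁻¹ * Real.exp (-(z-ρ*x)^2/(2*(1-ρ^2)))
            + (Real.sqrt (2*Real.pi))⁻¹ * c⁻¹ * Real.exp (-(-z-ρ*x)^2/(2*(1-ρ^2))))/2
          ≤ (Real.sqrt (1-ρ^2))⁻¹ * Real.exp (ρ^2*t^2) * ((Real.sqrt (2*Real.pi))⁻¹ * Real.exp (-(z-0)^2/(2*(1:ℝ)))) := by
        have h2 : -(z-0)^2/(2*(1:ℝ)) = -z^2/2 := by ring_nf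
        rw [h2, ← hc]
        calc ((Real.sqrt (2*Real.pi))⁻¹ * c⁻¹ * Real.exp (-(z-ρ*x)^2/(2*(1-ρ^2)))
              + (Real.sqrt (2*Real.pi))⁻¹ * c⁻¹ * Real.exp (-(-z-ρ*x)^2/(2*(1-ρ^2))))/2
            = (Real.sqrt (2*Real.pi))⁻¹ * c⁻¹ *
              ((Real.exp (-(z-ρ*x)^2/(2*(1-ρ^2))) + Real.exp (-(-z-ρ*x)^2/(2*(1-ρ^2))))/2) := by
              ring
          _ ≤ (Real.sqrt (2*Real.pi))⁻¹ * c⁻¹ * (Real.exp (ρ^2*t^2) * Real.exp (-z^2/2)) := by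
              apply mul_le_mul_of_nonneg_left _ (by positivity)
              rw [e1] at hkey
              linarith
          _ = c⁻¹ * Real.exp (ρ^2*t^2) * ((Real.sqrt (2*Real.pi))⁻¹ * Real.exp (-z^2/2)) := by
              ring
      convert goal_eq using 2 <;> ring_nf <;> simp
  calc ∫ z in (-t)..t, (f z + f (-z))/2 ≤ ∫ z in (-t)..t, K * gaussianPDFReal 0 1 z := hmono
    _ = K * ∫ z in (-t)..t, gaussianPDFReal 0 1 z := by
        rw [intervalIntegral.integral_const_mul]

/-- Joint law of a `ρ`-correlated pair of standard Gaussians. -/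
noncomputable def corrPair (ρ : ℝ) : Measure (ℝ × ℝ) :=
  Measure.map (fun p : ℝ × ℝ => (p.1, ρ * p.1 + Real.sqrt (1 - ρ ^ 2) * p.2))
    ((gaussianReal 0 1).prod (gaussianReal 0 1))

lemma corrPair_box_bound (ρ t : ℝ) (hρ : ρ^2 ≤ 1/4) (ht : 0 ≤ t) (ht1 : t ≤ 1) :
    corrPair ρ {p : ℝ × ℝ | |p.1| ≤ t ∧ |p.2| ≤ t}
      ≤ ENNReal.ofReal ((Real.sqrt (1-ρ^2))⁻¹ * Real.exp (ρ^2*t^2))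
          * gaussianReal 0 1 {z : ℝ | |z| ≤ t} * gaussianReal 0 1 {z : ℝ | |z| ≤ t} := by
  set c : ℝ := Real.sqrt (1-ρ^2) with hc
  set μ : Measure ℝ := gaussianReal 0 1 with hμ
  have hSm : MeasurableSet {p : ℝ × ℝ | |p.1| ≤ t ∧ |p.2| ≤ t} := by
    have h1 : {p : ℝ × ℝ | |p.1| ≤ t ∧ |p.2| ≤ t}
        = (Prod.fst ⁻¹' Set.Icc (-t) t) ∩ (Prod.snd ⁻¹' Set.Icc (-t) t) := by
      ext p; simp [abs_le, Set.mem_Icc]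
    rw [h1]
    exact (measurable_fst measurableSet_Icc).inter (measurable_snd measurableSet_Icc)
  have hFm : Measurable (fun p : ℝ × ℝ => (p.1, ρ * p.1 + c * p.2)) := by fun_prop
  rw [corrPair, Measure.map_apply hFm hSm]
  have hpre : (fun p : ℝ × ℝ => (p.1, ρ * p.1 + c * p.2)) ⁻¹' {p : ℝ × ℝ | |p.1| ≤ t ∧ |p.2| ≤ t}
      = {p : ℝ × ℝ | |p.1| ≤ t ∧ |ρ * p.1 + c * p.2| ≤ t} := rfl
  rw [hpre]
  have hTm : MeasurableSet {p : ℝ × ℝ | |p.1| ≤ t ∧ |ρ * p.1 + c * p.2| ≤ t} := by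
    have h1 : {p : ℝ × ℝ | |p.1| ≤ t ∧ |ρ * p.1 + c * p.2| ≤ t}
        = (Prod.fst ⁻¹' Set.Icc (-t) t) ∩ ((fun p : ℝ × ℝ => ρ * p.1 + c * p.2) ⁻¹' Set.Icc (-t) t) := by
      ext p; simp [abs_le, Set.mem_Icc]
    rw [h1]
    exact (measurable_fst measurableSet_Icc).inter
      ((by fun_prop : Measurable (fun p : ℝ × ℝ => ρ * p.1 + c * p.2)) measurableSet_Icc)
  rw [Measure.prod_apply hTm]
  set B : ENNReal := ENNReal.ofReal ((Real.sqrt (1-ρ^2))⁻¹ * Real.exp (ρ^2*t^2))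
      * μ {z : ℝ | |z| ≤ t} with hB
  have hbound : ∀ x : ℝ, μ (Prod.mk x ⁻¹' {p : ℝ × ℝ | |p.1| ≤ t ∧ |ρ * p.1 + c * p.2| ≤ t})
      ≤ Set.indicator {x : ℝ | |x| ≤ t} (fun _ => B) x := by
    intro x
    by_cases hx : |x| ≤ t
    · have hsec : Prod.mk x ⁻¹' {p : ℝ × ℝ | |p.1| ≤ t ∧ |ρ * p.1 + c * p.2| ≤ t}
          = {y : ℝ | |ρ*x + c * y| ≤ t} := by
        ext y; simp [hx]
      rw [hsec, Set.indicator_of_mem (by exact hx : x ∈ {x : ℝ | |x| ≤ t})]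
      exact section_bound ρ t x hρ ht ht1 hx
    · have hsec : Prod.mk x ⁻¹' {p : ℝ × ℝ | |p.1| ≤ t ∧ |ρ * p.1 + c * p.2| ≤ t} = ∅ := by
        ext y; simp [hx]
      rw [hsec, Set.indicator_of_notMem (by exact hx : x ∉ {x : ℝ | |x| ≤ t})]
      simp
  calc ∫⁻ x, μ (Prod.mk x ⁻¹' {p : ℝ × ℝ | |p.1| ≤ t ∧ |ρ * p.1 + c * p.2| ≤ t}) ∂μ
      ≤ ∫⁻ x, Set.indicator {x : ℝ | |x| ≤ t} (fun _ => B) x ∂μ := lintegral_mono hbound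
    _ = B * μ {x : ℝ | |x| ≤ t} := by
        rw [lintegral_indicator_const]
        have : {x : ℝ | |x| ≤ t} = Set.Icc (-t) t := by ext x; simp [abs_le]
        rw [this]; exact measurableSet_Icc
    _ = ENNReal.ofReal ((Real.sqrt (1-ρ^2))⁻¹ * Real.exp (ρ^2*t^2))
          * μ {z : ℝ | |z| ≤ t} * μ {z : ℝ | |z| ≤ t} := by rw [hB]

lemma K_le_exp (ρ t : ℝ) (hρ : ρ^2 ≤ 1/4) (ht3 : t^2 ≤ 1/3) :
    (Real.sqrt (1-ρ^2))⁻¹ * Real.exp (ρ^2*t^2) ≤ Real.exp (ρ^2) := by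
  have hv : (0:ℝ) < 1 - ρ^2 := by linarith
  have ha := Real.add_one_le_exp (4/3*ρ^2)
  have hprod : 1 ≤ (1-ρ^2) * Real.exp (4/3*ρ^2) := by
    nlinarith [mul_le_mul_of_nonneg_left ha hv.le, sq_nonneg ρ, sq_nonneg (ρ*ρ)]
  have h1 : Real.exp (-(2/3*ρ^2)) ≤ Real.sqrt (1-ρ^2) := by
    rw [show (-(2/3*ρ^2)) = -(2/3*ρ^2) from rfl]
    apply Real.le_sqrt' (Real.exp_pos _) |>.mpr
    have hsq : Real.exp (-(2/3*ρ^2)) ^ 2 = Real.exp (-(4/3*ρ^2)) := by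
      rw [sq, ← Real.exp_add]; ring_nf
    rw [hsq, Real.exp_neg, inv_eq_one_div, div_le_iff₀ (Real.exp_pos _)]
    nlinarith [hprod]
  have h1' : (Real.sqrt (1-ρ^2))⁻¹ ≤ Real.exp (2/3*ρ^2) := by
    have := inv_anti₀ (Real.exp_pos (-(2/3*ρ^2))) h1
    rwa [← Real.exp_neg, neg_neg] at this
  have h2 : Real.exp (ρ^2*t^2) ≤ Real.exp (1/3*ρ^2) := by
    apply Real.exp_le_exp.mpr
    nlinarith [sq_nonneg ρ]
  calc (Real.sqrt (1-ρ^2))⁻¹ * Real.exp (ρ^2*t^2)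
      ≤ Real.exp (2/3*ρ^2) * Real.exp (1/3*ρ^2) := by
        apply mul_le_mul h1' h2 (Real.exp_pos _).le (Real.exp_pos _).le
    _ = Real.exp (ρ^2) := by rw [← Real.exp_add]; ring_nf

/-- **Laplace method bound.** If `m(n)/n → 0`, `γ > 1` and
`ε = γ 2^{-n/m} √(πn/2)`, then the central part
`L = 2^n ∑_{k=⌈n/4⌉}^{⌊3n/4⌋} C(n,k) P_{ρ_k}(|√n X| ≤ ε, |√n Y| ≤ ε)^m` satisfies
`L ≤ (1 + o(1)) (2^n P(|Z| ≤ ε/√n)^m)²` as `n → ∞`. -/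
theorem laplace_main_term_bound
    (m : ℕ → ℕ) (hm_pos : ∀ n, 0 < m n)
    (hm_sub : Tendsto (fun n => (m n : ℝ) / (n : ℝ)) atTop (nhds 0))
    (γ : ℝ) (hγ : 1 < γ)
    (ε : ℕ → ℝ)
    (hε : ∀ n, ε n = γ * (2 : ℝ) ^ (-(n : ℝ) / (m n : ℝ)) * Real.sqrt (Real.pi * n / 2)) :
    ∃ e : ℕ → ℝ, Tendsto e atTop (nhds 0) ∧
      ∀ᶠ n : ℕ in atTop,
        (2 : ℝ) ^ n * ∑ k ∈ Finset.Icc ((n + 3) / 4) (3 * n / 4), (n.choose k : ℝ) *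
            ((corrPair (1 - 2 * (k : ℝ) / (n : ℝ)))
              {p : ℝ × ℝ | |Real.sqrt n * p.1| ≤ ε n ∧ |Real.sqrt n * p.2| ≤ ε n}).toReal
              ^ (m n)
          ≤ (1 + e n) * ((2 : ℝ) ^ n *
              ((gaussianReal 0 1) {z : ℝ | |z| ≤ ε n / Real.sqrt n}).toReal ^ (m n)) ^ 2 := by
  have hγ0 : (0:ℝ) < γ := lt_trans one_pos hγ
  refine ⟨fun n => 2 * (m n : ℝ) / (n:ℝ), ?_, ?_⟩
  · have := hm_sub.const_mul (2:ℝ)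
    simp only [mul_zero] at this
    convert this using 2 with n
    · ring
  -- eventual hypotheses
  · have hA : ∀ᶠ n : ℕ in atTop, 1 ≤ n := eventually_ge_atTop 1
    have hB : ∀ᶠ n : ℕ in atTop, (m n : ℝ)/(n:ℝ) < 1/4 :=
      hm_sub.eventually (eventually_lt_nhds (by norm_num))
    -- t → 0
    have hg : Tendsto (fun n => (m n : ℝ)/(n:ℝ)) atTop (nhdsWithin 0 (Set.Ioi 0)) := by
      apply tendsto_nhdsWithin_of_tendsto_nhds_of_eventually_within _ hm_sub
      filter_upwards [eventually_ge_atTop 1] with n hn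
      have h1 : (0:ℝ) < n := by exact_mod_cast (by omega : 0 < n)
      have h2 : (0:ℝ) < m n := by exact_mod_cast hm_pos n
      exact div_pos h2 h1
    have hinv : Tendsto (fun n : ℕ => (n:ℝ)/(m n : ℝ)) atTop atTop := by
      have h := hg.inv_tendsto_nhdsGT_zero
      have heq : (fun n : ℕ => (m n : ℝ)/(n:ℝ))⁻¹ = fun n : ℕ => (n:ℝ)/(m n : ℝ) := by
        funext n; simp [Pi.inv_apply, inv_div]
      rwa [heq] at h
    have hneg : Tendsto (fun n : ℕ => -((n:ℝ)/(m n : ℝ))) atTop atBot :=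
      tendsto_neg_atTop_atBot.comp hinv
    have hrp : Tendsto (fun n : ℕ => (2:ℝ) ^ (-(n:ℝ)/(m n : ℝ))) atTop (nhds 0) := by
      simp_rw [Real.rpow_def_of_pos (by norm_num : (0:ℝ) < 2), neg_div]
      exact Real.tendsto_exp_atBot.comp (hneg.const_mul_atBot (Real.log_pos one_lt_two))
    have htt : Tendsto (fun n : ℕ => ε n / Real.sqrt (n:ℝ)) atTop (nhds 0) := by
      have heq : (fun n : ℕ => γ * (2:ℝ) ^ (-(n:ℝ)/(m n : ℝ)) * Real.sqrt (Real.pi/2))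
          =ᶠ[atTop] (fun n : ℕ => ε n / Real.sqrt (n:ℝ)) := by
        filter_upwards [eventually_ge_atTop 1] with n hn
        have hn0 : (0:ℝ) < n := by exact_mod_cast hn
        have hsn : (0:ℝ) < Real.sqrt n := Real.sqrt_pos.mpr hn0
        rw [hε n]
        have : Real.sqrt (Real.pi * n / 2) = Real.sqrt (Real.pi/2) * Real.sqrt n := by
          rw [← Real.sqrt_mul (by positivity : (0:ℝ) ≤ Real.pi/2)]
          ring_nf
        rw [this]
        field_simp
      apply Tendsto.congr' heq
      have := (hrp.const_mul γ).mul_const (Real.sqrt (Real.pi/2))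
      simpa using this
    have hC : ∀ᶠ n : ℕ in atTop, (ε n / Real.sqrt (n:ℝ))^2 ≤ 1/3 := by
      have h2 : Tendsto (fun n : ℕ => (ε n / Real.sqrt (n:ℝ))^2) atTop (nhds 0) := by
        have := htt.mul htt
        simpa [sq] using this
      exact h2.eventually (eventually_le_nhds (by norm_num))
    filter_upwards [hA, hB, hC] with n hn1 hn4 ht3
    -- basic facts
    have hn0 : (0:ℝ) < n := by exact_mod_cast (by omega : 0 < n)
    have hsn : (0:ℝ) < Real.sqrt (n:ℝ) := Real.sqrt_pos.mpr hn0
    set t : ℝ := ε n / Real.sqrt (n:ℝ) with htdef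
    have hε0 : 0 ≤ ε n := by
      rw [hε n]
      have h1 : (0:ℝ) ≤ (2:ℝ) ^ (-(n:ℝ)/(m n : ℝ)) := Real.rpow_nonneg (by norm_num) _
      have h2 : (0:ℝ) ≤ Real.sqrt (Real.pi * n / 2) := Real.sqrt_nonneg _
      positivity
    have ht0 : 0 ≤ t := div_nonneg hε0 hsn.le
    have ht1 : t ≤ 1 := by nlinarith [ht3, ht0]
    have hm4 : (m n : ℝ) ≤ (n:ℝ)/4 := by
      have := (div_lt_iff₀ hn0).mp hn4
      linarith
    have hm0 : (0:ℝ) ≤ (m n : ℝ) := by positivity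
    set P : ℝ := ((gaussianReal 0 1) {z : ℝ | |z| ≤ t}).toReal with hPdef
    have hP0 : 0 ≤ P := ENNReal.toReal_nonneg
    -- the box set rewrite
    have hsetS : {p : ℝ × ℝ | |Real.sqrt (n:ℝ) * p.1| ≤ ε n ∧ |Real.sqrt (n:ℝ) * p.2| ≤ ε n}
        = {p : ℝ × ℝ | |p.1| ≤ t ∧ |p.2| ≤ t} := by
      ext p
      simp only [Set.mem_setOf_eq, abs_mul, abs_of_nonneg (Real.sqrt_nonneg (n:ℝ))]
      rw [htdef, le_div_iff₀' hsn, le_div_iff₀' hsn]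
    -- per-term bound
    have hterm : ∀ k ∈ Finset.Icc ((n + 3) / 4) (3 * n / 4),
        (n.choose k : ℝ) * ((corrPair (1 - 2 * (k : ℝ) / (n : ℝ)))
            {p : ℝ × ℝ | |Real.sqrt n * p.1| ≤ ε n ∧ |Real.sqrt n * p.2| ≤ ε n}).toReal ^ (m n)
          ≤ (n.choose k : ℝ) * (Real.exp ((m n : ℝ) * (1 - 2 * (k : ℝ) / (n : ℝ))^2) * (P ^ (m n))^2) := by
      intro k hk
      rcases Finset.mem_Icc.mp hk with ⟨hk1, hk2⟩
      have hnk1 : n ≤ 4*k := by omega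
      have hnk2 : 4*k ≤ 3*n := by omega
      set ρ : ℝ := 1 - 2 * (k : ℝ) / (n : ℝ) with hρdef
      have hρ2 : ρ^2 ≤ 1/4 := by
        have c1 : (n:ℝ) ≤ 4*(k:ℝ) := by exact_mod_cast hnk1
        have c2 : (4:ℝ)*(k:ℝ) ≤ 3*(n:ℝ) := by exact_mod_cast hnk2
        have e1 : (1:ℝ)/2 ≤ 2*(k:ℝ)/(n:ℝ) := by rw [le_div_iff₀ hn0]; linarith
        have e2 : 2*(k:ℝ)/(n:ℝ) ≤ 3/2 := by rw [div_le_iff₀ hn0]; linarith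
        have : -(1/2 : ℝ) ≤ ρ ∧ ρ ≤ 1/2 := by
          constructor <;> [rw [hρdef]; rw [hρdef]] <;> linarith
        nlinarith [this.1, this.2]
      rw [hsetS]
      -- ENNReal bound
      have hbox := corrPair_box_bound ρ t hρ2 ht0 ht1
      set K : ℝ := (Real.sqrt (1-ρ^2))⁻¹ * Real.exp (ρ^2*t^2) with hKdef
      have hK0 : 0 ≤ K := by positivity
      set μI : ENNReal := gaussianReal 0 1 {z : ℝ | |z| ≤ t} with hμI
      have hμIne : μI ≠ ⊤ := measure_ne_top _ _
      have hQ : ((corrPair ρ) {p : ℝ × ℝ | |p.1| ≤ t ∧ |p.2| ≤ t}).toReal ≤ K * P * P := by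
        calc ((corrPair ρ) {p : ℝ × ℝ | |p.1| ≤ t ∧ |p.2| ≤ t}).toReal
            ≤ (ENNReal.ofReal K * μI * μI).toReal := by
              apply ENNReal.toReal_mono _ hbox
              exact ENNReal.mul_ne_top (ENNReal.mul_ne_top ENNReal.ofReal_ne_top hμIne) hμIne
          _ = K * P * P := by
              rw [ENNReal.toReal_mul, ENNReal.toReal_mul, ENNReal.toReal_ofReal hK0]
      have hQ2 : ((corrPair ρ) {p : ℝ × ℝ | |p.1| ≤ t ∧ |p.2| ≤ t}).toReal
          ≤ Real.exp (ρ^2) * (P * P) := by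
        calc ((corrPair ρ) {p : ℝ × ℝ | |p.1| ≤ t ∧ |p.2| ≤ t}).toReal
            ≤ K * P * P := hQ
          _ = K * (P * P) := by ring
          _ ≤ Real.exp (ρ^2) * (P * P) :=
              mul_le_mul_of_nonneg_right (K_le_exp ρ t hρ2 ht3) (by positivity)
      have hQ0 : 0 ≤ ((corrPair ρ) {p : ℝ × ℝ | |p.1| ≤ t ∧ |p.2| ≤ t}).toReal :=
        ENNReal.toReal_nonneg
      have hpow := pow_le_pow_left₀ hQ0 hQ2 (m n)
      have hrhs : (Real.exp (ρ^2) * (P * P)) ^ (m n)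
          = Real.exp ((m n : ℝ) * ρ^2) * (P ^ (m n))^2 := by
        rw [mul_pow, Real.exp_nat_mul, mul_pow]
        ring_nf
      rw [hrhs] at hpow
      exact mul_le_mul_of_nonneg_left hpow (by positivity)
    -- sum bound
    have hsum := Finset.sum_le_sum hterm
    have hsub : Finset.Icc ((n + 3) / 4) (3 * n / 4) ⊆ Finset.range (n+1) := by
      intro k hk
      rcases Finset.mem_Icc.mp hk with ⟨_, hk2⟩
      rw [Finset.mem_range]
      omega
    have hsum2 : ∑ k ∈ Finset.Icc ((n + 3) / 4) (3 * n / 4),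
        (n.choose k : ℝ) * (Real.exp ((m n : ℝ) * (1 - 2 * (k : ℝ) / (n : ℝ))^2) * (P ^ (m n))^2)
        ≤ (P ^ (m n))^2 * (2^n * (1 + 2*(m n : ℝ)/(n:ℝ))) := by
      calc ∑ k ∈ Finset.Icc ((n + 3) / 4) (3 * n / 4),
            (n.choose k : ℝ) * (Real.exp ((m n : ℝ) * (1 - 2 * (k : ℝ) / (n : ℝ))^2) * (P ^ (m n))^2)
          = (P ^ (m n))^2 * ∑ k ∈ Finset.Icc ((n + 3) / 4) (3 * n / 4),
              (n.choose k : ℝ) * Real.exp ((m n : ℝ) * (1 - 2 * (k : ℝ) / (n : ℝ))^2) := by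
            rw [Finset.mul_sum]
            exact Finset.sum_congr rfl fun k _ => by ring
        _ ≤ (P ^ (m n))^2 * ∑ k ∈ Finset.range (n+1),
              (n.choose k : ℝ) * Real.exp ((m n : ℝ) * (1 - 2 * (k : ℝ) / (n : ℝ))^2) := by
            apply mul_le_mul_of_nonneg_left _ (by positivity)
            apply Finset.sum_le_sum_of_subset_of_nonneg hsub
            intro k _ _
            positivity
        _ ≤ (P ^ (m n))^2 * (2^n * (1 + 2*(m n : ℝ)/(n:ℝ))) := by
            apply mul_le_mul_of_nonneg_left _ (by positivity)
            exact binom_mgf n hn1 (m n : ℝ) hm0 hm4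
    -- conclude
    have hfinal := le_trans hsum hsum2
    calc (2 : ℝ) ^ n * ∑ k ∈ Finset.Icc ((n + 3) / 4) (3 * n / 4), (n.choose k : ℝ) *
            ((corrPair (1 - 2 * (k : ℝ) / (n : ℝ)))
              {p : ℝ × ℝ | |Real.sqrt n * p.1| ≤ ε n ∧ |Real.sqrt n * p.2| ≤ ε n}).toReal
              ^ (m n)
        ≤ (2:ℝ)^n * ((P ^ (m n))^2 * (2^n * (1 + 2*(m n : ℝ)/(n:ℝ)))) := by
          apply mul_le_mul_of_nonneg_left hfinal (by positivity)
      _ = (1 + 2 * (m n : ℝ) / (n:ℝ)) * ((2 : ℝ) ^ n * P ^ (m n)) ^ 2 := by ring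
end

section
/- Let m = m(n) be a sequence of positive integers with m(n)/n → 0 as n → ∞, fix γ > 1, and set ε = γ·2^{-n/m}·√(πn/2). Then for Z a standard Gaussian random variable, 2^n·P(|Z| ≤ ε/√n)^m ≥ (1 − o(1))·((γ+1)/2)^m as n → ∞. -/
open MeasureTheory ProbabilityTheory Filter Real

lemma gauss_lb (t : ℝ) (ht : 0 ≤ t) :
    2 * t * (Real.sqrt (2 * π))⁻¹ * Real.exp (-(t^2)/2)
      ≤ ((gaussianReal 0 1) {z : ℝ | |z| ≤ t}).toReal := by
  have hset : {z : ℝ | |z| ≤ t} = Set.Icc (-t) t := by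
    ext x; simp [abs_le]
  rw [hset, gaussianReal_apply_eq_integral 0 one_ne_zero,
    ENNReal.toReal_ofReal (integral_nonneg fun x => gaussianPDFReal_nonneg _ _ _)]
  have hle : ∀ x ∈ Set.Icc (-t) t,
      (Real.sqrt (2 * π))⁻¹ * Real.exp (-(t^2)/2) ≤ gaussianPDFReal 0 1 x := by
    intro x hx
    have hx2 : x^2 ≤ t^2 := sq_le_sq' hx.1 hx.2
    have : Real.exp (-(t^2)/2) ≤ Real.exp (-(x^2)/2) := by
      apply Real.exp_le_exp.2; linarith
    simp only [gaussianPDFReal, NNReal.coe_one, mul_one, sub_zero]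
    gcongr
  calc 2 * t * (Real.sqrt (2 * π))⁻¹ * Real.exp (-(t^2)/2)
      = ∫ x in Set.Icc (-t) t, (Real.sqrt (2 * π))⁻¹ * Real.exp (-(t^2)/2) := by
        rw [setIntegral_const, measureReal_def, Real.volume_Icc]
        rw [ENNReal.toReal_ofReal (by linarith)]
        simp [smul_eq_mul]; ring
    _ ≤ ∫ x in Set.Icc (-t) t, gaussianPDFReal 0 1 x := by
        apply setIntegral_mono_on
        · exact integrableOn_const measure_Icc_lt_top.ne
        · exact (integrable_gaussianPDFReal _ _).integrableOn
        · exact measurableSet_Icc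
        · exact hle

/-- If `m(n)/n → 0`, `γ > 1` and `ε = γ 2^{-n/m} √(πn/2)`, then for a
standard Gaussian `Z`, `2^n P(|Z| ≤ ε/√n)^m ≥ (1 − o(1)) ((γ+1)/2)^m` as `n → ∞`. -/
theorem first_moment_lower_bound
    (m : ℕ → ℕ) (hm_pos : ∀ n, 0 < m n)
    (hm_sub : Tendsto (fun n => (m n : ℝ) / (n : ℝ)) atTop (nhds 0))
    (γ : ℝ) (hγ : 1 < γ)
    (ε : ℕ → ℝ)
    (hε : ∀ n, ε n = γ * (2 : ℝ) ^ (-(n : ℝ) / (m n : ℝ)) * Real.sqrt (Real.pi * n / 2)) :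
    ∃ e : ℕ → ℝ, Tendsto e atTop (nhds 0) ∧
      ∀ᶠ n : ℕ in atTop,
        (1 - e n) * ((γ + 1) / 2) ^ (m n)
          ≤ (2 : ℝ) ^ n *
            ((gaussianReal 0 1) {z : ℝ | |z| ≤ ε n / Real.sqrt n}).toReal ^ (m n) := by
  refine ⟨fun _ => 0, tendsto_const_nhds, ?_⟩
  have hγ0 : (0:ℝ) < γ := by linarith
  set t : ℕ → ℝ := fun n => ε n / Real.sqrt n with ht_def
  -- eventual formula for t
  have h_t_eq : ∀ᶠ n : ℕ in atTop,
      t n = γ * Real.sqrt (π/2) * (2:ℝ) ^ (-(n:ℝ)/(m n : ℝ)) := by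
    filter_upwards [eventually_gt_atTop 0] with n hn
    have hn' : (0:ℝ) < n := by exact_mod_cast hn
    have hsq : Real.sqrt (π * n / 2) = Real.sqrt (π/2) * Real.sqrt n := by
      rw [← Real.sqrt_mul (by positivity)]
      ring_nf
    have hsn : Real.sqrt n ≠ 0 := by positivity
    show ε n / Real.sqrt n = _
    rw [hε n, hsq]
    field_simp
  -- exponent tends to -∞
  have hx : Tendsto (fun n : ℕ => -(n:ℝ)/(m n : ℝ)) atTop atBot := by
    have h1 : Tendsto (fun n : ℕ => (n:ℝ)/(m n : ℝ)) atTop atTop := by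
      have : Tendsto (fun n : ℕ => (m n : ℝ) / (n : ℝ)) atTop (nhdsWithin 0 (Set.Ioi 0)) := by
        rw [tendsto_nhdsWithin_iff]
        refine ⟨hm_sub, ?_⟩
        filter_upwards [eventually_gt_atTop 0] with n hn
        have hn' : (0:ℝ) < n := by exact_mod_cast hn
        have hm' : (0:ℝ) < m n := by exact_mod_cast hm_pos n
        exact div_pos hm' hn'
      have := this.inv_tendsto_nhdsGT_zero
      refine this.congr fun n => ?_
      simp [inv_div]
    refine tendsto_atBot_mono (fun n => le_of_eq (by rw [neg_div])) ?_
    exact tendsto_neg_atBot_iff.mpr h1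
  -- t tends to 0
  have ht0 : Tendsto t atTop (nhds 0) := by
    have h2 : Tendsto (fun n : ℕ => γ * Real.sqrt (π/2) * (2:ℝ) ^ (-(n:ℝ)/(m n : ℝ)))
        atTop (nhds 0) := by
      have := ((tendsto_rpow_atBot_of_base_gt_one 2 one_lt_two).comp hx).const_mul
        (γ * Real.sqrt (π/2))
      simpa using this
    exact h2.congr' (h_t_eq.mono fun n h => h.symm)
  -- eventual inequality from continuity
  have h_main : ∀ᶠ n : ℕ in atTop, (γ+1)/2 ≤ γ * Real.exp (-(t n)^2/2) := by
    have h3 : Tendsto (fun n => γ * Real.exp (-(t n)^2/2)) atTop (nhds γ) := by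
      have : Tendsto (fun n => -(t n)^2/2) atTop (nhds 0) := by
        have := ((ht0.pow 2).neg).div_const 2
        simpa using this
      have := (Real.continuous_exp.tendsto 0).comp this
      simpa using this.const_mul γ
    exact Filter.Tendsto.eventually_const_le (by linarith) h3
  filter_upwards [h_t_eq, h_main, eventually_gt_atTop 0] with n heq hge hn
  have hm0 : ((m n : ℝ)) ≠ 0 := by
    have := hm_pos n; positivity
  have hr : (0:ℝ) < (2:ℝ) ^ (-(n:ℝ)/(m n : ℝ)) := Real.rpow_pos_of_pos two_pos _
  have ht_nonneg : 0 ≤ t n := by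
    rw [heq]; positivity
  -- key pointwise inequality
  have key : (γ+1)/2 ≤ (2:ℝ) ^ ((n:ℝ)/(m n : ℝ)) *
      ((gaussianReal 0 1) {z : ℝ | |z| ≤ t n}).toReal := by
    have hlb := gauss_lb (t n) ht_nonneg
    have hsqrt : Real.sqrt (2*π) = 2 * Real.sqrt (π/2) := by
      rw [show (2:ℝ)*π = 2^2 * (π/2) by ring, Real.sqrt_mul (by positivity),
        Real.sqrt_sq (by norm_num)]
    have h4 : 2 * t n * (Real.sqrt (2 * π))⁻¹ = γ * (2:ℝ) ^ (-(n:ℝ)/(m n : ℝ)) := by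
      rw [heq, hsqrt]
      have : Real.sqrt (π/2) ≠ 0 := by positivity
      field_simp
    rw [h4] at hlb
    have h5 : (2:ℝ) ^ (-(n:ℝ)/(m n : ℝ)) * ((γ+1)/2)
        ≤ γ * (2:ℝ) ^ (-(n:ℝ)/(m n : ℝ)) * Real.exp (-(t n)^2/2) := by
      calc (2:ℝ) ^ (-(n:ℝ)/(m n : ℝ)) * ((γ+1)/2)
          ≤ (2:ℝ) ^ (-(n:ℝ)/(m n : ℝ)) * (γ * Real.exp (-(t n)^2/2)) := by
            exact mul_le_mul_of_nonneg_left hge hr.le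
        _ = γ * (2:ℝ) ^ (-(n:ℝ)/(m n : ℝ)) * Real.exp (-(t n)^2/2) := by ring
    have h6 := h5.trans hlb
    have h7 : (2:ℝ) ^ ((n:ℝ)/(m n : ℝ)) * (2:ℝ) ^ (-(n:ℝ)/(m n : ℝ)) = 1 := by
      rw [← Real.rpow_add two_pos, neg_div, add_neg_cancel, Real.rpow_zero]
    calc (γ+1)/2 = (2:ℝ) ^ ((n:ℝ)/(m n : ℝ)) * ((2:ℝ) ^ (-(n:ℝ)/(m n : ℝ)) * ((γ+1)/2)) := by
          rw [← mul_assoc, h7, one_mul]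
      _ ≤ (2:ℝ) ^ ((n:ℝ)/(m n : ℝ)) *
          ((gaussianReal 0 1) {z : ℝ | |z| ≤ t n}).toReal := by
          exact mul_le_mul_of_nonneg_left h6 (Real.rpow_pos_of_pos two_pos _).le
  have hbase : (0:ℝ) ≤ (γ+1)/2 := by linarith
  have hpow := pow_le_pow_left₀ hbase key (m n)
  rw [mul_pow] at hpow
  have h8 : ((2:ℝ) ^ ((n:ℝ)/(m n : ℝ))) ^ (m n) = (2:ℝ) ^ (n : ℕ) := by
    rw [← Real.rpow_natCast ((2:ℝ) ^ ((n:ℝ)/(m n : ℝ))) (m n), ← Real.rpow_mul (by norm_num),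
      div_mul_cancel₀ _ hm0, Real.rpow_natCast]
  rw [h8] at hpow
  simpa using hpow
end

section
/- Fix an arbitrary constant γ > 1. There exists Δ = Δ(γ) > 0 such that for every δ ≤ Δ, if m = δn and ε = ε(n) = γ·2^{-1/δ}·√(πn/2), then both 2^n·Σ_{k=0}^{⌊n/4⌋} C(n,k)·P_{ρ_k}( |√n·X| ≤ ε and |√n·Y| ≤ ε )^m and 2^n·Σ_{k=⌈3n/4⌉}^{n} C(n,k)·P_{ρ_k}( |√n·X| ≤ ε and |√n·Y| ≤ ε )^m are o( (2^n·P(|Z| ≤ ε/√n)^m)² ) as n → ∞, where ρ_k = 1 − 2k/n. -/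
set_option maxHeartbeats 1000000


open MeasureTheory ProbabilityTheory Filter Asymptotics

open Real

lemma gaussPDF_le (x : ℝ) : gaussianPDF 0 1 x ≤ ENNReal.ofReal ((Real.sqrt (2*π))⁻¹) := by
  rw [gaussianPDF]
  apply ENNReal.ofReal_le_ofReal
  rw [gaussianPDFReal]
  simp only [NNReal.coe_one, mul_one, sub_zero]
  calc (√(2 * π))⁻¹ * rexp (-x ^ 2 / 2) ≤ (√(2 * π))⁻¹ * 1 := by
        apply mul_le_mul_of_nonneg_left _ (by positivity)
        rw [Real.exp_le_one_iff]; nlinarith [sq_nonneg x]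
    _ = _ := mul_one _

lemma gauss_le (a b : ℝ) (hab : a ≤ b) :
    gaussianReal 0 1 (Set.Icc a b) ≤ ENNReal.ofReal ((b - a) / Real.sqrt (2 * π)) := by
  rw [gaussianReal_apply 0 one_ne_zero]
  calc ∫⁻ x in Set.Icc a b, gaussianPDF 0 1 x
      ≤ ∫⁻ _ in Set.Icc a b, ENNReal.ofReal ((Real.sqrt (2*π))⁻¹) :=
        lintegral_mono fun x => gaussPDF_le x
    _ = ENNReal.ofReal ((Real.sqrt (2*π))⁻¹) * volume (Set.Icc a b) := by
        rw [setLIntegral_const]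
    _ = ENNReal.ofReal ((b - a) / Real.sqrt (2 * π)) := by
        rw [Real.volume_Icc, ← ENNReal.ofReal_mul (by positivity)]
        rw [div_eq_mul_inv, mul_comm]

lemma gauss_ge (t : ℝ) (ht : 0 ≤ t) :
    ENNReal.ofReal (2 * t * Real.exp (-t^2/2) / Real.sqrt (2*π)) ≤
      gaussianReal 0 1 (Set.Icc (-t) t) := by
  rw [gaussianReal_apply 0 one_ne_zero]
  calc ENNReal.ofReal (2 * t * Real.exp (-t^2/2) / Real.sqrt (2*π))
      = ENNReal.ofReal (Real.exp (-t^2/2) * (Real.sqrt (2*π))⁻¹) * volume (Set.Icc (-t) t) := by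
        rw [Real.volume_Icc, ← ENNReal.ofReal_mul (by positivity)]
        congr 1
        field_simp
        ring
    _ = ∫⁻ _ in Set.Icc (-t) t, ENNReal.ofReal (Real.exp (-t^2/2) * (Real.sqrt (2*π))⁻¹) := by
        rw [setLIntegral_const]
    _ ≤ ∫⁻ x in Set.Icc (-t) t, gaussianPDF 0 1 x := by
        apply setLIntegral_mono (measurable_gaussianPDF 0 1)
        intro x hx
        rw [gaussianPDF]
        apply ENNReal.ofReal_le_ofReal
        rw [gaussianPDFReal]
        simp only [NNReal.coe_one, mul_one, sub_zero]
        rw [mul_comm]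
        apply mul_le_mul_of_nonneg_left _ (by positivity)
        apply Real.exp_le_exp.2
        have h1 : x^2 ≤ t^2 := sq_le_sq' hx.1 hx.2
        linarith



lemma corrPair_meas (ρ : ℝ) :
    Measurable (fun p : ℝ × ℝ => (p.1, ρ * p.1 + Real.sqrt (1 - ρ ^ 2) * p.2)) :=
  measurable_fst.prodMk ((measurable_fst.const_mul ρ).add (measurable_snd.const_mul _))

lemma measSet (t : ℝ) : MeasurableSet {p : ℝ × ℝ | |p.1| ≤ t ∧ |p.2| ≤ t} := by
  apply MeasurableSet.inter
  · exact measurableSet_le (measurable_fst.abs) measurable_const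
  · exact measurableSet_le (measurable_snd.abs) measurable_const

lemma corrPair_le_marginal (ρ t : ℝ) :
    corrPair ρ {p : ℝ × ℝ | |p.1| ≤ t ∧ |p.2| ≤ t} ≤ gaussianReal 0 1 {z : ℝ | |z| ≤ t} := by
  rw [corrPair, Measure.map_apply (corrPair_meas ρ) (measSet t)]
  calc ((gaussianReal 0 1).prod (gaussianReal 0 1))
        ((fun p : ℝ × ℝ => (p.1, ρ * p.1 + Real.sqrt (1 - ρ ^ 2) * p.2)) ⁻¹'
          {p : ℝ × ℝ | |p.1| ≤ t ∧ |p.2| ≤ t})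
      ≤ ((gaussianReal 0 1).prod (gaussianReal 0 1)) ({z : ℝ | |z| ≤ t} ×ˢ Set.univ) := by
        apply measure_mono
        intro p hp
        exact ⟨hp.1, trivial⟩
    _ = gaussianReal 0 1 {z : ℝ | |z| ≤ t} := by
        rw [Measure.prod_prod, measure_univ, mul_one]

lemma corrPair_le_strip (ρ t : ℝ) (hρ : 0 < 1 - ρ ^ 2) (ht : 0 ≤ t) :
    corrPair ρ {p : ℝ × ℝ | |p.1| ≤ t ∧ |p.2| ≤ t} ≤
      ENNReal.ofReal (2 * t / (Real.sqrt (1 - ρ ^ 2) * Real.sqrt (2 * π))) *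
        gaussianReal 0 1 {z : ℝ | |z| ≤ t} := by
  set s := Real.sqrt (1 - ρ ^ 2) with hs
  have hs0 : 0 < s := Real.sqrt_pos.2 hρ
  set M := ENNReal.ofReal (2 * t / (s * Real.sqrt (2 * π))) with hM
  rw [corrPair, Measure.map_apply (corrPair_meas ρ) (measSet t)]
  set E := (fun p : ℝ × ℝ => (p.1, ρ * p.1 + s * p.2)) ⁻¹' {p : ℝ × ℝ | |p.1| ≤ t ∧ |p.2| ≤ t}
    with hE
  have hEm : MeasurableSet E := (corrPair_meas ρ) (measSet t)
  rw [Measure.prod_apply hEm]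
  have key : ∀ a : ℝ, gaussianReal 0 1 (Prod.mk a ⁻¹' E) ≤
      Set.indicator {a : ℝ | |a| ≤ t} (fun _ => M) a := by
    intro a
    by_cases ha : |a| ≤ t
    · rw [Set.indicator_of_mem (show a ∈ {a : ℝ | |a| ≤ t} from ha)]
      have hsub : (Prod.mk a ⁻¹' E) ⊆ Set.Icc ((-t - ρ * a)/s) ((t - ρ * a)/s) := by
        intro b hb
        have h2 : |ρ * a + s * b| ≤ t := hb.2
        rw [abs_le] at h2
        constructor
        · rw [div_le_iff₀ hs0]; nlinarith [h2.1]
        · rw [le_div_iff₀ hs0]; nlinarith [h2.2]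
      calc gaussianReal 0 1 (Prod.mk a ⁻¹' E)
          ≤ gaussianReal 0 1 (Set.Icc ((-t - ρ * a)/s) ((t - ρ * a)/s)) := measure_mono hsub
        _ ≤ ENNReal.ofReal (((t - ρ * a)/s - (-t - ρ * a)/s) / Real.sqrt (2 * π)) := by
            exact gauss_le _ _ ((div_le_div_iff_of_pos_right hs0).2 (by linarith))
        _ = M := by
            rw [hM]
            congr 1
            field_simp
            ring
    · rw [Set.indicator_of_notMem (show a ∉ {a : ℝ | |a| ≤ t} from ha)]
      have hempty : Prod.mk a ⁻¹' E = ∅ :=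
        Set.eq_empty_of_forall_notMem (fun b hb => ha hb.1)
      rw [hempty, measure_empty]
  calc ∫⁻ a, gaussianReal 0 1 (Prod.mk a ⁻¹' E) ∂(gaussianReal 0 1)
      ≤ ∫⁻ a, Set.indicator {a : ℝ | |a| ≤ t} (fun _ => M) a ∂(gaussianReal 0 1) :=
        lintegral_mono key
    _ = M * gaussianReal 0 1 {a : ℝ | |a| ≤ t} := by
        rw [lintegral_indicator (measurableSet_le measurable_abs measurable_const)]
        rw [setLIntegral_const]

lemma gauss_map_neg : (gaussianReal 0 1).map (fun x : ℝ => -x) = gaussianReal 0 1 := by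
  have : (fun x : ℝ => -x) = (fun x : ℝ => (-1 : ℝ) * x) := by funext x; ring
  rw [this]
  have := gaussianReal_map_const_mul (μ := 0) (v := 1) (-1 : ℝ)
  simpa using this

lemma corrPair_neg (ρ t : ℝ) :
    corrPair (-ρ) {p : ℝ × ℝ | |p.1| ≤ t ∧ |p.2| ≤ t}
      = corrPair ρ {p : ℝ × ℝ | |p.1| ≤ t ∧ |p.2| ≤ t} := by
  have hprod : ((gaussianReal 0 1).prod (gaussianReal 0 1)).map
      (Prod.map (id : ℝ → ℝ) (fun x : ℝ => -x)) = (gaussianReal 0 1).prod (gaussianReal 0 1) := by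
    rw [← Measure.map_prod_map _ _ measurable_id measurable_neg]
    rw [Measure.map_id, gauss_map_neg]
  have hmeas2 : Measurable (Prod.map (id : ℝ → ℝ) (fun x : ℝ => -x)) :=
    measurable_id.prodMap measurable_neg
  rw [corrPair, corrPair, Measure.map_apply (corrPair_meas _) (measSet t),
    Measure.map_apply (corrPair_meas _) (measSet t)]
  conv_lhs => rw [← hprod]
  rw [Measure.map_apply hmeas2 ((corrPair_meas (-ρ)) (measSet t))]
  congr 1
  ext ⟨a, b⟩
  simp only [Set.mem_preimage, Prod.map_apply, id_eq, Set.mem_setOf_eq, neg_sq]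
  have hkey : -ρ * a + √(1 - ρ ^ 2) * -b = -(ρ * a + √(1 - ρ ^ 2) * b) := by ring
  constructor
  · rintro ⟨h1, h2⟩
    rw [hkey, abs_neg] at h2
    exact ⟨h1, h2⟩
  · rintro ⟨h1, h2⟩
    rw [hkey, abs_neg]
    exact ⟨h1, h2⟩

lemma sum_choose_le (n K : ℕ) (hK : K ≤ n) (x : ℝ) (hx0 : 0 < x) (hx1 : x ≤ 1) :
    ∑ k ∈ Finset.range (K + 1), (n.choose k : ℝ) ≤ (1 + x) ^ n / x ^ K := by
  have h1 : ∀ k ∈ Finset.range (K + 1), (n.choose k : ℝ) ≤ (n.choose k : ℝ) * x ^ k / x ^ K := by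
    intro k hk
    rw [Finset.mem_range] at hk
    have hxk : x ^ K ≤ x ^ k := pow_le_pow_of_le_one hx0.le hx1 (by omega)
    rw [le_div_iff₀ (by positivity)]
    calc (n.choose k : ℝ) * x ^ K ≤ (n.choose k : ℝ) * x ^ k := by
          apply mul_le_mul_of_nonneg_left hxk (by positivity)
      _ = _ := rfl
  calc ∑ k ∈ Finset.range (K + 1), (n.choose k : ℝ)
      ≤ ∑ k ∈ Finset.range (K + 1), (n.choose k : ℝ) * x ^ k / x ^ K :=
        Finset.sum_le_sum h1
    _ = (∑ k ∈ Finset.range (K + 1), (n.choose k : ℝ) * x ^ k) / x ^ K := by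
        rw [Finset.sum_div]
    _ ≤ (∑ k ∈ Finset.range (n + 1), (n.choose k : ℝ) * x ^ k) / x ^ K := by
        gcongr
    _ = (1 + x) ^ n / x ^ K := by
        congr 1
        rw [show (1 : ℝ) + x = x + 1 by ring, add_pow]
        apply Finset.sum_congr rfl
        intro k _
        rw [one_pow, mul_one, mul_comm]

/-- Core single-`n` estimate. -/
lemma main_est (δ L c β pbar p : ℝ) (n : ℕ) (q : ℕ → ℝ)
    (hδ0 : 0 < δ) (hL : 0 < L)
    (hβdef : β = Real.exp (-(Real.log 2) / (8 * δ)))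
    (hp0 : 0 < p) (hpbar0 : 0 < pbar)
    (hlogpbar : δ * Real.log pbar = δ * L - Real.log 2)
    (hplow : δ * L - Real.log 2 - c / 2 ≤ δ * Real.log p)
    (hpup : δ * Real.log p ≤ δ * L - Real.log 2)
    (hc0 : 0 ≤ c) (hc1 : c ≤ 1 / 100) (hc2 : c ≤ δ * L / 4)
    (hcond3 : β * (1 + Real.log 2 / (8 * δ)) ≤ δ * L / 4)
    (hq0 : ∀ k, 0 ≤ q k)
    (hqp : ∀ k, q k ≤ p)
    (hq2 : ∀ k, Nat.floor (β * n) < k → k ∈ Finset.range (n / 4 + 1) →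
      q k ≤ p * pbar / Real.sqrt (3 * β)) :
    ∑ k ∈ Finset.range (n / 4 + 1), (n.choose k : ℝ) * q k ^ (δ * n : ℝ) ≤
      (Real.exp (-(5 * δ * L / 8) * n) + Real.exp (-(1 / 200 : ℝ) * n)) *
        (2 : ℝ) ^ n * p ^ (2 * (δ * n) : ℝ) := by
  have hβ0 : 0 < β := by rw [hβdef]; positivity
  have hβ1 : β ≤ 1 := by
    rw [hβdef]
    apply Real.exp_le_one_iff.2
    have := Real.log_pos (by norm_num : (1:ℝ) < 2)
    have h8 : 0 < 8 * δ := by linarith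
    apply div_nonpos_of_nonpos_of_nonneg <;> linarith
  set m : ℝ := δ * n with hm
  have hm0 : 0 ≤ m := by positivity
  set Kβ : ℕ := Nat.floor (β * n) with hKβ
  have hKβle : (Kβ : ℝ) ≤ β * n := Nat.floor_le (by positivity)
  have hKβn : Kβ ≤ n := by
    have h1 : (Kβ : ℝ) ≤ (n : ℝ) := le_trans hKβle (by nlinarith [Nat.cast_nonneg (α := ℝ) n])
    exact_mod_cast h1
  set x8 : ℝ := Real.log 2 / (8 * δ) with hx8
  have hlog2 : 0 < Real.log 2 := Real.log_pos (by norm_num)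
  have hx80 : 0 < x8 := by rw [hx8]; positivity
  set B2 : ℝ := (p * pbar / Real.sqrt (3 * β)) ^ m with hB2
  have hsB : 0 < Real.sqrt (3 * β) := Real.sqrt_pos.2 (by positivity)
  have hB2base : 0 < p * pbar / Real.sqrt (3 * β) := by positivity
  have hB20 : 0 ≤ B2 := by rw [hB2]; positivity
  -- split the sum
  have hsplit : ∑ k ∈ Finset.range (n / 4 + 1), (n.choose k : ℝ) * q k ^ m ≤
      (∑ k ∈ Finset.range (Kβ + 1), (n.choose k : ℝ)) * p ^ m +
      (∑ k ∈ Finset.range (n / 4 + 1), (n.choose k : ℝ)) * B2 := by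
    rw [← Finset.sum_filter_add_sum_filter_not (Finset.range (n / 4 + 1)) (fun k => k ≤ Kβ)]
    apply add_le_add
    · calc ∑ k ∈ (Finset.range (n / 4 + 1)).filter (fun k => k ≤ Kβ),
            (n.choose k : ℝ) * q k ^ m
          ≤ ∑ k ∈ (Finset.range (n / 4 + 1)).filter (fun k => k ≤ Kβ),
            (n.choose k : ℝ) * p ^ m := by
            apply Finset.sum_le_sum
            intro k _
            apply mul_le_mul_of_nonneg_left _ (by positivity)
            exact Real.rpow_le_rpow (hq0 k) (hqp k) hm0
        _ ≤ ∑ k ∈ Finset.range (Kβ + 1), (n.choose k : ℝ) * p ^ m := by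
            apply Finset.sum_le_sum_of_subset_of_nonneg
            · intro k hk
              simp only [Finset.mem_filter, Finset.mem_range] at hk ⊢
              omega
            · intro k _ _
              positivity
        _ = (∑ k ∈ Finset.range (Kβ + 1), (n.choose k : ℝ)) * p ^ m := by
            rw [Finset.sum_mul]
    · calc ∑ k ∈ (Finset.range (n / 4 + 1)).filter (fun k => ¬ k ≤ Kβ),
            (n.choose k : ℝ) * q k ^ m
          ≤ ∑ k ∈ (Finset.range (n / 4 + 1)).filter (fun k => ¬ k ≤ Kβ),
            (n.choose k : ℝ) * B2 := by
            apply Finset.sum_le_sum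
            intro k hk
            simp only [Finset.mem_filter, Finset.mem_range, not_le] at hk
            apply mul_le_mul_of_nonneg_left _ (by positivity)
            exact Real.rpow_le_rpow (hq0 k) (hq2 k hk.2 (Finset.mem_range.2 hk.1)) hm0
        _ ≤ ∑ k ∈ Finset.range (n / 4 + 1), (n.choose k : ℝ) * B2 := by
            apply Finset.sum_le_sum_of_subset_of_nonneg (Finset.filter_subset _ _)
            intro k _ _
            positivity
        _ = _ := by rw [Finset.sum_mul]
  have hSA : ∑ k ∈ Finset.range (Kβ + 1), (n.choose k : ℝ) ≤ (1 + β) ^ n / β ^ Kβ :=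
    sum_choose_le n Kβ hKβn β hβ0 hβ1
  have hSQ : ∑ k ∈ Finset.range (n / 4 + 1), (n.choose k : ℝ) ≤
      (1 + 1/3) ^ n / (1/3 : ℝ) ^ (n / 4) :=
    sum_choose_le n (n / 4) (Nat.div_le_self n 4) (1/3) (by norm_num) (by norm_num)
  have hl2 : Real.log 2 < 0.6931471808 := Real.log_two_lt_d9
  have hl3 : 1 ≤ Real.log 3 := by
    rw [Real.le_log_iff_exp_le (by norm_num)]
    have := Real.exp_one_lt_d9
    linarith
  have hpm : p ^ m = Real.exp (Real.log p * m) := Real.rpow_def_of_pos hp0 m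
  have hp2m : p ^ (2 * m) = Real.exp (Real.log p * (2 * m)) := Real.rpow_def_of_pos hp0 _
  have h2n : (2 : ℝ) ^ n = Real.exp ((n : ℝ) * Real.log 2) := by
    rw [Real.exp_nat_mul, Real.exp_log (by norm_num : (0:ℝ) < 2)]
  have hmlp : (n : ℝ) * (δ * L - Real.log 2 - c / 2) ≤ Real.log p * m := by
    have h1 : Real.log p * m = (n : ℝ) * (δ * Real.log p) := by rw [hm]; ring
    rw [h1]
    exact mul_le_mul_of_nonneg_left hplow (Nat.cast_nonneg n)
  have hmlp' : Real.log p * m ≤ (n : ℝ) * (δ * L - Real.log 2) := by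
    have h1 : Real.log p * m = (n : ℝ) * (δ * Real.log p) := by rw [hm]; ring
    rw [h1]
    exact mul_le_mul_of_nonneg_left hpup (Nat.cast_nonneg n)
  -- Goal A
  have goalA : ((1 + β) ^ n / β ^ Kβ) * p ^ m ≤
      Real.exp (-(5 * δ * L / 8) * n) * (2 : ℝ) ^ n * p ^ (2 * m) := by
    have h1 : (1 + β) ^ n ≤ Real.exp (β * n) := by
      calc (1 + β) ^ n ≤ (Real.exp β) ^ n := by
            apply pow_le_pow_left₀ (by positivity)
            linarith [Real.add_one_le_exp β]
        _ = Real.exp (β * n) := by rw [mul_comm]; exact (Real.exp_nat_mul β n).symm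
    have h2 : (1 : ℝ) / β ^ Kβ ≤ Real.exp (x8 * (β * n)) := by
      have hβx : β = Real.exp (-x8) := by rw [hβdef, hx8, neg_div]
      have h3 : β ^ Kβ = Real.exp (-(x8 * Kβ)) := by
        rw [hβx, ← Real.exp_nat_mul]; ring_nf
      rw [h3, Real.exp_neg, one_div, inv_inv, Real.exp_le_exp]
      exact mul_le_mul_of_nonneg_left hKβle (le_of_lt hx80)
    calc ((1 + β) ^ n / β ^ Kβ) * p ^ m
        = (1 + β) ^ n * ((1:ℝ) / β ^ Kβ) * p ^ m := by ring
      _ ≤ Real.exp (β * n) * Real.exp (x8 * (β * n)) * p ^ m := by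
          apply mul_le_mul_of_nonneg_right _ (by positivity)
          apply mul_le_mul h1 h2 (by positivity) (by positivity)
      _ = Real.exp (β * n + x8 * (β * n) + Real.log p * m) := by
          rw [hpm, ← Real.exp_add, ← Real.exp_add]
      _ ≤ Real.exp (-(5 * δ * L / 8) * n + (n : ℝ) * Real.log 2 + Real.log p * (2 * m)) := by
          rw [Real.exp_le_exp]
          have hβ1x : (β * (1 + x8)) * n ≤ (δ * L / 4) * n :=
            mul_le_mul_of_nonneg_right hcond3 (Nat.cast_nonneg n)
          have hlpm : Real.log p * (2 * m) = Real.log p * m + Real.log p * m := by ring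
          rw [hlpm]
          have hc2' : (c / 2) * n ≤ (δ * L / 8) * n := by
            apply mul_le_mul_of_nonneg_right _ (Nat.cast_nonneg n)
            linarith
          have hexp1 : β * ↑n + x8 * (β * ↑n) = (β * (1 + x8)) * n := by ring
          have hexp2 : (n : ℝ) * (δ * L - Real.log 2 - c / 2)
              = (n : ℝ) * (δ * L) - (n : ℝ) * Real.log 2 - (c / 2) * n := by ring
          rw [hexp1]
          linarith [hmlp, hexp2 ▸ hmlp]
      _ = _ := by rw [Real.exp_add, Real.exp_add, h2n, hp2m]
  -- Goal B
  have hlogβ : Real.log β = -x8 := by rw [hβdef, Real.log_exp, hx8, neg_div]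
  have hbase0 : (0:ℝ) < p * pbar / Real.sqrt (3 * β) := hB2base
  have hlogbase : Real.log (p * pbar / Real.sqrt (3 * β)) =
      Real.log p + Real.log pbar - (Real.log 3 + Real.log β) / 2 := by
    rw [Real.log_div (by positivity) (ne_of_gt hsB), Real.log_mul hp0.ne' hpbar0.ne',
      Real.log_sqrt (by positivity), Real.log_mul (by norm_num) hβ0.ne']
  have hB2exp : B2 = Real.exp ((Real.log p + Real.log pbar - (Real.log 3 + Real.log β) / 2) * m) := by
    rw [hB2, Real.rpow_def_of_pos hbase0, hlogbase]
  have h43 : ((1 : ℝ) + 1/3) ^ n = Real.exp ((n : ℝ) * Real.log (4/3)) := by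
    rw [Real.exp_nat_mul, Real.exp_log (by norm_num)]
    norm_num
  have h3q : (1 : ℝ) / (1/3 : ℝ) ^ (n / 4) = Real.exp (((n / 4 : ℕ) : ℝ) * Real.log 3) := by
    rw [Real.exp_nat_mul, Real.exp_log (by norm_num : (0:ℝ) < 3)]
    rw [one_div, ← inv_pow]
    norm_num
  have hfloor4 : ((n / 4 : ℕ) : ℝ) ≤ (n : ℝ) / 4 := Nat.cast_div_le
  have hlog43 : Real.log (4/3) = 2 * Real.log 2 - Real.log 3 := by
    rw [Real.log_div (by norm_num) (by norm_num), show (4:ℝ) = 2^2 by norm_num, Real.log_pow]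
    push_cast
    ring
  have hmlb : Real.log pbar * m = (n : ℝ) * (δ * L) - (n : ℝ) * Real.log 2 := by
    have h1 : Real.log pbar * m = (n : ℝ) * (δ * Real.log pbar) := by rw [hm]; ring
    rw [h1, hlogpbar]; ring
  have hmx8 : x8 * m = (n : ℝ) * Real.log 2 / 8 := by
    rw [hx8, hm]
    field_simp
  have hml3 : 0 ≤ Real.log 3 * m := by positivity
  have goalB : ((1 + 1/3 : ℝ) ^ n / (1/3 : ℝ) ^ (n / 4)) * B2 ≤
      Real.exp (-(1 / 200 : ℝ) * n) * (2 : ℝ) ^ n * p ^ (2 * m) := by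
    have heq : ((1 + 1/3 : ℝ) ^ n / (1/3 : ℝ) ^ (n / 4)) * B2 =
        Real.exp ((n : ℝ) * Real.log (4/3) + ((n / 4 : ℕ) : ℝ) * Real.log 3 +
          (Real.log p + Real.log pbar - (Real.log 3 + Real.log β) / 2) * m) := by
      rw [Real.exp_add, Real.exp_add, ← h43, ← h3q, ← hB2exp]
      ring
    rw [heq, h2n, hp2m, ← Real.exp_add, ← Real.exp_add, Real.exp_le_exp]
    have hcoef : (17/16) * Real.log 2 - (3/4) * Real.log 3 + 1/200 + c/2 ≤ 0 := by
      linarith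
    have hncoef : (n : ℝ) * ((17/16) * Real.log 2 - (3/4) * Real.log 3 + 1/200 + c/2) ≤ 0 :=
      mul_nonpos_of_nonneg_of_nonpos (Nat.cast_nonneg n) hcoef
    have hfl3 : ((n / 4 : ℕ) : ℝ) * Real.log 3 ≤ ((n : ℝ) / 4) * Real.log 3 :=
      mul_le_mul_of_nonneg_right hfloor4 (by linarith)
    have hexpand : (n : ℝ) * (δ * L - Real.log 2 - c / 2)
        = (n : ℝ) * (δ * L) - (n : ℝ) * Real.log 2 - (c / 2) * n := by ring
    have hmlp2 := hexpand ▸ hmlp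
    rw [hlog43, hlogβ]
    have hexpand2 : (Real.log p + Real.log pbar - (Real.log 3 + -x8) / 2) * m =
        Real.log p * m + Real.log pbar * m - (Real.log 3 * m) / 2 + (x8 * m) / 2 := by ring
    rw [hexpand2, hmlb, hmx8]
    have hexpand3 : Real.log p * (2 * m) = Real.log p * m + Real.log p * m := by ring
    rw [hexpand3]
    linarith [hmlp2, hncoef, hfl3, hml3]
  -- combine
  calc ∑ k ∈ Finset.range (n / 4 + 1), (n.choose k : ℝ) * q k ^ m
      ≤ (∑ k ∈ Finset.range (Kβ + 1), (n.choose k : ℝ)) * p ^ m +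
        (∑ k ∈ Finset.range (n / 4 + 1), (n.choose k : ℝ)) * B2 := hsplit
    _ ≤ ((1 + β) ^ n / β ^ Kβ) * p ^ m + ((1 + 1/3 : ℝ) ^ n / (1/3 : ℝ) ^ (n / 4)) * B2 := by
        apply add_le_add
        · exact mul_le_mul_of_nonneg_right hSA (by positivity)
        · exact mul_le_mul_of_nonneg_right hSQ hB20
    _ ≤ Real.exp (-(5 * δ * L / 8) * n) * (2 : ℝ) ^ n * p ^ (2 * m) +
        Real.exp (-(1 / 200 : ℝ) * n) * (2 : ℝ) ^ n * p ^ (2 * m) := add_le_add goalA goalB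
    _ = _ := by ring

lemma exp_neg_le {x : ℝ} (hx : 0 < x) : Real.exp (-x) ≤ 1/x := by
  rw [Real.exp_neg, inv_eq_one_div]
  apply one_div_le_one_div_of_le hx
  linarith [Real.add_one_le_exp x]

lemma cube_le_exp {x : ℝ} (hx : 0 ≤ x) : x^3/27 ≤ Real.exp x := by
  have h := Real.add_one_le_exp (x/3)
  have h3 : Real.exp x = (Real.exp (x/3))^3 := by
    rw [← Real.exp_nat_mul]
    congr 1
    push_cast
    ring
  rw [h3]
  calc x^3/27 = (x/3)^3 := by ring
    _ ≤ (x/3+1)^3 := by apply pow_le_pow_left₀ (by positivity); linarith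
    _ ≤ (Real.exp (x/3))^3 := by apply pow_le_pow_left₀ (by positivity); linarith

lemma conds (γ δ : ℝ) (hγ : 1 < γ) (hδ0 : 0 < δ)
    (hδΔ : δ ≤ min (min 1 (Real.log γ/(2*π*γ^2))) (min (1/(50*π*γ^2+1)) (Real.log γ/200000))) :
    (γ * (2:ℝ)^(-(1:ℝ)/δ) * Real.sqrt (π/2))^2 ≤ Real.log γ/4 ∧
    (γ * (2:ℝ)^(-(1:ℝ)/δ) * Real.sqrt (π/2))^2 * δ ≤ 1/100 ∧
    Real.exp (-(Real.log 2)/(8*δ)) * (1 + Real.log 2/(8*δ)) ≤ δ * Real.log γ/4 := by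
  have hL : 0 < Real.log γ := Real.log_pos hγ
  have hγ0 : 0 < γ := by linarith
  have hπ : 0 < π := Real.pi_pos
  have hδ1 : δ ≤ 1 := le_trans hδΔ (le_trans (min_le_left _ _) (min_le_left _ _))
  have hδa : δ ≤ Real.log γ/(2*π*γ^2) :=
    le_trans hδΔ (le_trans (min_le_left _ _) (min_le_right _ _))
  have hδb : δ ≤ 1/(50*π*γ^2+1) :=
    le_trans hδΔ (le_trans (min_le_right _ _) (min_le_left _ _))
  have hδc : δ ≤ Real.log γ/200000 :=
    le_trans hδΔ (le_trans (min_le_right _ _) (min_le_right _ _))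
  have hlog2 : 0 < Real.log 2 := Real.log_pos (by norm_num)
  have hl2lo : 0.6931471803 < Real.log 2 := Real.log_two_gt_d9
  -- bound on t^2
  have ha : (2:ℝ)^(-(1:ℝ)/δ) = Real.exp (-(Real.log 2/δ)) := by
    rw [Real.rpow_def_of_pos (by norm_num : (0:ℝ) < 2)]
    congr 1
    field_simp
  have ht2 : (γ * (2:ℝ)^(-(1:ℝ)/δ) * Real.sqrt (π/2))^2 ≤ γ^2 * (π/2) * δ := by
    have hs2 : (Real.sqrt (π/2))^2 = π/2 := Real.sq_sqrt (by positivity)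
    have ha2 : ((2:ℝ)^(-(1:ℝ)/δ))^2 = Real.exp (-(2*Real.log 2/δ)) := by
      rw [ha, ← Real.exp_nat_mul]
      congr 1
      ring
    have hexp : Real.exp (-(2*Real.log 2/δ)) ≤ δ := by
      calc Real.exp (-(2*Real.log 2/δ)) ≤ 1/(2*Real.log 2/δ) := exp_neg_le (by positivity)
        _ = δ/(2*Real.log 2) := by field_simp
        _ ≤ δ := by
            rw [div_le_iff₀ (by positivity)]
            nlinarith
    calc (γ * (2:ℝ)^(-(1:ℝ)/δ) * Real.sqrt (π/2))^2
        = γ^2 * ((2:ℝ)^(-(1:ℝ)/δ))^2 * (Real.sqrt (π/2))^2 := by ring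
      _ = γ^2 * Real.exp (-(2*Real.log 2/δ)) * (π/2) := by rw [ha2, hs2]
      _ ≤ γ^2 * δ * (π/2) := by
          apply mul_le_mul_of_nonneg_right _ (by positivity)
          apply mul_le_mul_of_nonneg_left hexp (by positivity)
      _ = γ^2 * (π/2) * δ := by ring
  refine ⟨?_, ?_, ?_⟩
  · calc (γ * (2:ℝ)^(-(1:ℝ)/δ) * Real.sqrt (π/2))^2 ≤ γ^2 * (π/2) * δ := ht2
      _ ≤ γ^2 * (π/2) * (Real.log γ/(2*π*γ^2)) := by
          apply mul_le_mul_of_nonneg_left hδa (by positivity)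
      _ = Real.log γ/4 := by field_simp; ring
  · have h1 : (γ * (2:ℝ)^(-(1:ℝ)/δ) * Real.sqrt (π/2))^2 * δ ≤ (γ^2 * (π/2) * δ) * δ := by
      apply mul_le_mul_of_nonneg_right ht2 hδ0.le
    have h2 : δ * (50*π*γ^2+1) ≤ 1 := by
      rw [← le_div_iff₀ (by positivity)]
      exact hδb
    nlinarith [sq_nonneg γ, sq_nonneg δ, mul_pos hδ0 hδ0]
  · set x : ℝ := Real.log 2/(8*δ) with hx
    have hx0 : 0 < x := by positivity
    have hx112 : 1/12 ≤ x := by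
      rw [hx, le_div_iff₀ (by positivity)]
      nlinarith
    have hcube : Real.exp (-x) * x^3 ≤ 27 := by
      have h1 : x^3/27 ≤ Real.exp x := cube_le_exp hx0.le
      have h2 : Real.exp (-x) = (Real.exp x)⁻¹ := Real.exp_neg x
      rw [h2, inv_mul_le_iff₀ (Real.exp_pos x)]
      nlinarith [Real.exp_pos x]
    have h13 : 1 + x ≤ 13 * x := by linarith
    have hmain : Real.exp (-x) * (1 + x) * x^2 ≤ 351 := by
      calc Real.exp (-x) * (1 + x) * x^2 ≤ Real.exp (-x) * (13*x) * x^2 := by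
            apply mul_le_mul_of_nonneg_right _ (by positivity)
            apply mul_le_mul_of_nonneg_left h13 (Real.exp_pos _).le
        _ = 13 * (Real.exp (-x) * x^3) := by ring
        _ ≤ 13 * 27 := by linarith
        _ = 351 := by norm_num
    have hxδ : x * (8*δ) = Real.log 2 := by rw [hx]; field_simp
    have htarget : 351 * (64*δ^2) ≤ (δ * Real.log γ/4) * (x^2 * (64*δ^2)) := by
      have hx2 : x^2 * (64*δ^2) = (Real.log 2)^2 := by
        have : (x * (8*δ))^2 = (Real.log 2)^2 := by rw [hxδ]
        nlinarith [this]
      rw [hx2]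
      have hδsmall : 200000 * δ ≤ Real.log γ := by
        rw [← le_div_iff₀' (by norm_num)]
        linarith [hδc]
      have hl2sq : (0.48:ℝ) ≤ (Real.log 2)^2 := by nlinarith
      have h200 : 200000 * δ * δ ≤ Real.log γ * δ :=
        mul_le_mul_of_nonneg_right hδsmall hδ0.le
      have h3 : (Real.log γ * δ) * 0.48 ≤ (Real.log γ * δ) * (Real.log 2)^2 :=
        mul_le_mul_of_nonneg_left hl2sq (by positivity)
      have h4 : (200000 * δ * δ) * 0.48 ≤ (Real.log γ * δ) * 0.48 :=
        mul_le_mul_of_nonneg_right h200 (by norm_num)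
      nlinarith [h3, h4]
    have hfin : Real.exp (-x) * (1 + x) * (x^2 * (64*δ^2)) ≤
        (δ * Real.log γ/4) * (x^2 * (64*δ^2)) := by
      calc Real.exp (-x) * (1 + x) * (x^2 * (64*δ^2))
          = (Real.exp (-x) * (1 + x) * x^2) * (64*δ^2) := by ring
        _ ≤ 351 * (64*δ^2) := by
            apply mul_le_mul_of_nonneg_right hmain (by positivity)
        _ ≤ _ := htarget
    have hpos : 0 < x^2 * (64*δ^2) := by positivity
    have hres : Real.exp (-x) * (1 + x) ≤ δ * Real.log γ/4 := le_of_mul_le_mul_right hfin hpos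
    have hneg : -(Real.log 2)/(8*δ) = -x := by rw [hx]; ring
    rw [hneg]
    exact hres

/-- **truncation in the linear regime.** For every `γ > 1` there is
`Δ = Δ(γ) > 0` such that for every `0 < δ ≤ Δ`, with `m = δ n` and
`ε = γ 2^{-1/δ} √(πn/2)`, the tail parts `k ≤ ⌊n/4⌋` and `k ≥ ⌈3n/4⌉` of
`2^n ∑_k C(n,k) P_{ρ_k}(|√n X| ≤ ε, |√n Y| ≤ ε)^m` are `o((2^n P(|Z| ≤ ε/√n)^m)²)`
as `n → ∞`, where `ρ_k = 1 − 2k/n`. -/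
theorem linear_regime_truncation (γ : ℝ) (hγ : 1 < γ) :
    ∃ Δ : ℝ, 0 < Δ ∧ ∀ δ : ℝ, 0 < δ → δ ≤ Δ →
      ∀ ε : ℕ → ℝ,
        (∀ n, ε n = γ * (2 : ℝ) ^ (-(1 : ℝ) / δ) * Real.sqrt (Real.pi * n / 2)) →
      ((fun n : ℕ => (2 : ℝ) ^ n * ∑ k ∈ Finset.range (n / 4 + 1), (n.choose k : ℝ) *
          ((corrPair (1 - 2 * (k : ℝ) / (n : ℝ)))
            {p : ℝ × ℝ | |Real.sqrt n * p.1| ≤ ε n ∧ |Real.sqrt n * p.2| ≤ ε n}).toReal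
            ^ (δ * n : ℝ))
        =o[atTop]
        (fun n : ℕ => ((2 : ℝ) ^ n *
          ((gaussianReal 0 1) {z : ℝ | |z| ≤ ε n / Real.sqrt n}).toReal ^ (δ * n : ℝ)) ^ 2))
      ∧
      ((fun n : ℕ => (2 : ℝ) ^ n * ∑ k ∈ Finset.Icc ((3 * n + 3) / 4) n, (n.choose k : ℝ) *
          ((corrPair (1 - 2 * (k : ℝ) / (n : ℝ)))
            {p : ℝ × ℝ | |Real.sqrt n * p.1| ≤ ε n ∧ |Real.sqrt n * p.2| ≤ ε n}).toReal
            ^ (δ * n : ℝ))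
        =o[atTop]
        (fun n : ℕ => ((2 : ℝ) ^ n *
          ((gaussianReal 0 1) {z : ℝ | |z| ≤ ε n / Real.sqrt n}).toReal ^ (δ * n : ℝ)) ^ 2)) := by
  have hγ0 : (0:ℝ) < γ := by linarith
  have hL : 0 < Real.log γ := Real.log_pos hγ
  have hπ : 0 < π := Real.pi_pos
  refine ⟨min (min 1 (Real.log γ/(2*π*γ^2))) (min (1/(50*π*γ^2+1)) (Real.log γ/200000)),
    lt_min (lt_min one_pos (div_pos hL (by positivity)))
      (lt_min (by positivity) (div_pos hL (by norm_num))), ?_⟩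
  intro δ hδ0 hδΔ ε hε
  obtain ⟨cond1, cond2, cond3⟩ := conds γ δ hγ hδ0 hδΔ
  set L := Real.log γ with hLdef
  set t : ℝ := γ * (2:ℝ)^(-(1:ℝ)/δ) * Real.sqrt (π/2) with htdef
  have ht0 : 0 < t := by
    have := Real.rpow_pos_of_pos (show (0:ℝ) < 2 by norm_num) (-(1:ℝ)/δ)
    positivity
  set pbar : ℝ := γ * (2:ℝ)^(-(1:ℝ)/δ) with hpbardef
  have hpbar0 : 0 < pbar := by
    have := Real.rpow_pos_of_pos (show (0:ℝ) < 2 by norm_num) (-(1:ℝ)/δ)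
    positivity
  set c : ℝ := t^2 * δ with hcdef
  set β : ℝ := Real.exp (-(Real.log 2)/(8*δ)) with hβdef
  have hβpos : 0 < β := Real.exp_pos _
  set p : ℝ := (gaussianReal 0 1 {z : ℝ | |z| ≤ t}).toReal with hpdef
  have hset : {z : ℝ | |z| ≤ t} = Set.Icc (-t) t := by ext z; simp [abs_le]
  have hsqpos : 0 < Real.sqrt (π/2) := Real.sqrt_pos.2 (by positivity)
  have h2t : 2 * t / Real.sqrt (2*π) = pbar := by
    have hs : Real.sqrt (2*π) = 2 * Real.sqrt (π/2) := by
      rw [show (2:ℝ)*π = 2^2*(π/2) by ring, Real.sqrt_mul (by norm_num),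
        Real.sqrt_sq (by norm_num)]
    rw [htdef, hpbardef, hs]
    field_simp
  have hfin : (gaussianReal 0 1 {z : ℝ | |z| ≤ t}) ≠ ⊤ := measure_ne_top _ _
  have hp_le : p ≤ pbar := by
    apply ENNReal.toReal_le_of_le_ofReal hpbar0.le
    rw [hset]
    have h := gauss_le (-t) t (by linarith)
    rw [show t - -t = 2*t by ring, h2t] at h
    exact h
  have hp_ge : pbar * Real.exp (-t^2/2) ≤ p := by
    rw [hpdef, ← ENNReal.ofReal_le_iff_le_toReal hfin, hset]
    have h := gauss_ge t ht0.le
    rw [show 2*t*Real.exp (-t^2/2)/Real.sqrt (2*π)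
        = (2*t/Real.sqrt (2*π))*Real.exp (-t^2/2) by ring, h2t] at h
    exact h
  have hp0 : 0 < p := lt_of_lt_of_le (by positivity) hp_ge
  have hloga : Real.log ((2:ℝ)^(-(1:ℝ)/δ)) = (-(1:ℝ)/δ) * Real.log 2 :=
    Real.log_rpow (by norm_num) _
  have hlogpbar : δ * Real.log pbar = δ * L - Real.log 2 := by
    rw [hpbardef, Real.log_mul (ne_of_gt hγ0)
      (ne_of_gt (Real.rpow_pos_of_pos (by norm_num) _)), hloga, hLdef]
    field_simp
    ring
  have hpup : δ * Real.log p ≤ δ * L - Real.log 2 := by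
    rw [← hlogpbar]
    exact mul_le_mul_of_nonneg_left (Real.log_le_log hp0 hp_le) hδ0.le
  have hplow : δ * L - Real.log 2 - c/2 ≤ δ * Real.log p := by
    have h1 : Real.log (pbar * Real.exp (-t^2/2)) ≤ Real.log p :=
      Real.log_le_log (by positivity) hp_ge
    rw [Real.log_mul (ne_of_gt hpbar0) (ne_of_gt (Real.exp_pos _)), Real.log_exp] at h1
    have h2 : δ * (Real.log pbar + -t^2/2) ≤ δ * Real.log p :=
      mul_le_mul_of_nonneg_left h1 hδ0.le
    have h3 : δ * (Real.log pbar + -t^2/2) = δ * Real.log pbar - (t^2*δ)/2 := by ring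
    rw [h3, hlogpbar] at h2
    rw [hcdef]
    linarith
  have hc2 : c ≤ δ * L / 4 := by
    rw [hcdef]
    nlinarith [cond1, hδ0.le]
  have hc1 : c ≤ 1/100 := by rw [hcdef]; exact cond2
  have hc0 : 0 ≤ c := by rw [hcdef]; positivity
  -- tendsto of the bound
  have tendexp : ∀ a : ℝ, 0 < a → Tendsto (fun n : ℕ => Real.exp (-a * n)) atTop (nhds 0) := by
    intro a ha
    have h1 : (fun n : ℕ => Real.exp (-a * n)) = fun n : ℕ => (Real.exp (-a))^n := by
      funext n
      rw [← Real.exp_nat_mul]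
      ring_nf
    rw [h1]
    exact tendsto_pow_atTop_nhds_zero_of_lt_one (Real.exp_pos _).le
      (by rw [Real.exp_lt_one_iff]; linarith)
  have hφ0 : Tendsto (fun n : ℕ => Real.exp (-(5*δ*L/8) * n) + Real.exp (-(1/200:ℝ) * n))
      atTop (nhds 0) := by
    have h := (tendexp (5*δ*L/8) (by positivity)).add (tendexp (1/200) (by norm_num))
    simpa using h
  -- set equalities for n ≥ 1
  have hεt : ∀ n : ℕ, ε n = t * Real.sqrt n := by
    intro n
    rw [hε n, htdef, show π*(n:ℝ)/2 = (π/2)*(n:ℝ) by ring, Real.sqrt_mul (by positivity)]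
    ring
  have hseteqP : ∀ n : ℕ, 1 ≤ n →
      {q : ℝ × ℝ | |Real.sqrt n * q.1| ≤ ε n ∧ |Real.sqrt n * q.2| ≤ ε n}
        = {q : ℝ × ℝ | |q.1| ≤ t ∧ |q.2| ≤ t} := by
    intro n hn1
    have hN0 : (0:ℝ) < n := by exact_mod_cast hn1
    have hsqn : 0 < Real.sqrt n := Real.sqrt_pos.2 hN0
    have habs : ∀ y : ℝ, (|Real.sqrt n * y| ≤ ε n ↔ |y| ≤ t) := by
      intro y
      rw [hεt n, abs_mul, abs_of_nonneg (Real.sqrt_nonneg _), mul_comm (Real.sqrt n) |y|]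
      exact mul_le_mul_iff_left₀ hsqn
    ext q
    simp only [Set.mem_setOf_eq, habs]
  have hseteqG : ∀ n : ℕ, 1 ≤ n →
      {z : ℝ | |z| ≤ ε n / Real.sqrt n} = {z : ℝ | |z| ≤ t} := by
    intro n hn1
    have hN0 : (0:ℝ) < n := by exact_mod_cast hn1
    have hsqn : 0 < Real.sqrt n := Real.sqrt_pos.2 hN0
    have h1 : ε n / Real.sqrt n = t := by
      rw [hεt n, mul_div_assoc, div_self (ne_of_gt hsqn), mul_one]
    rw [h1]
  -- part 1
  have part1 : (fun n : ℕ => (2 : ℝ) ^ n * ∑ k ∈ Finset.range (n / 4 + 1), (n.choose k : ℝ) *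
      ((corrPair (1 - 2 * (k : ℝ) / (n : ℝ)))
        {p : ℝ × ℝ | |Real.sqrt n * p.1| ≤ ε n ∧ |Real.sqrt n * p.2| ≤ ε n}).toReal
        ^ (δ * n : ℝ))
      =o[atTop]
      (fun n : ℕ => ((2 : ℝ) ^ n *
        ((gaussianReal 0 1) {z : ℝ | |z| ≤ ε n / Real.sqrt n}).toReal ^ (δ * n : ℝ)) ^ 2) := by
    rw [isLittleO_iff]
    intro cc hcc
    filter_upwards [hφ0.eventually (gt_mem_nhds hcc), eventually_ge_atTop 1] with n hφn hn1
    have hN0 : (0:ℝ) < n := by exact_mod_cast hn1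
    rw [hseteqP n hn1, hseteqG n hn1]
    set qf : ℕ → ℝ := fun k =>
      ((corrPair (1 - 2 * (k : ℝ) / (n : ℝ))) {q : ℝ × ℝ | |q.1| ≤ t ∧ |q.2| ≤ t}).toReal
      with hqf
    have hq0 : ∀ k, 0 ≤ qf k := fun k => ENNReal.toReal_nonneg
    have hqp : ∀ k, qf k ≤ p := by
      intro k
      rw [hqf, hpdef]
      exact ENNReal.toReal_mono hfin (corrPair_le_marginal _ t)
    have hq2 : ∀ k, Nat.floor (β*(n:ℝ)) < k → k ∈ Finset.range (n / 4 + 1) →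
        qf k ≤ p * pbar / Real.sqrt (3*β) := by
      intro k hk1 hk2
      have hβn : β*(n:ℝ) < k := (Nat.floor_lt (by positivity)).1 hk1
      have h4k : 4*(k:ℝ) ≤ (n:ℝ) := by
        rw [Finset.mem_range] at hk2
        have h4 : k * 4 ≤ n := by omega
        have h4' : ((k * 4 : ℕ) : ℝ) ≤ ((n:ℕ) : ℝ) := by exact_mod_cast h4
        push_cast at h4'
        linarith
      set ρ : ℝ := 1 - 2*(k:ℝ)/(n:ℝ) with hρdef
      have hKnn : (0:ℝ) ≤ (k:ℝ) := Nat.cast_nonneg k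
      have hexpρ : (1 - ρ^2) * (n:ℝ)^2 = 4*(k:ℝ)*((n:ℝ)-(k:ℝ)) := by
        rw [hρdef]
        field_simp
        ring
      have h3βle : 3*β*(n:ℝ)^2 ≤ (1-ρ^2)*(n:ℝ)^2 := by
        rw [hexpρ]
        nlinarith [mul_nonneg (sub_nonneg.2 hβn.le) hN0.le,
          mul_nonneg (by linarith : (0:ℝ) ≤ (n:ℝ) - 4*(k:ℝ)) hKnn]
      have h3βle' : 3*β ≤ 1-ρ^2 := le_of_mul_le_mul_right h3βle (by positivity)
      have h1ρ : 0 < 1 - ρ^2 := lt_of_lt_of_le (by positivity) h3βle'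
      have hstrip := corrPair_le_strip ρ t h1ρ ht0.le
      have hsqrtle : Real.sqrt (3*β) ≤ Real.sqrt (1-ρ^2) := Real.sqrt_le_sqrt h3βle'
      have hsq3β : 0 < Real.sqrt (3*β) := Real.sqrt_pos.2 (by positivity)
      have hsqρ : 0 < Real.sqrt (1-ρ^2) := Real.sqrt_pos.2 h1ρ
      have e1 : 2*t/(Real.sqrt (1-ρ^2) * Real.sqrt (2*π)) = pbar / Real.sqrt (1-ρ^2) := by
        rw [← h2t]
        have hsq2π : 0 < Real.sqrt (2*π) := Real.sqrt_pos.2 (by positivity)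
        field_simp
      have hM : 2*t/(Real.sqrt (1-ρ^2) * Real.sqrt (2*π)) ≤ pbar / Real.sqrt (3*β) := by
        rw [e1]
        exact div_le_div_of_nonneg_left hpbar0.le hsq3β hsqrtle
      calc qf k ≤ (ENNReal.ofReal (2*t/(Real.sqrt (1-ρ^2) * Real.sqrt (2*π))) *
            gaussianReal 0 1 {z : ℝ | |z| ≤ t}).toReal := by
            rw [hqf]
            exact ENNReal.toReal_mono (ENNReal.mul_ne_top ENNReal.ofReal_ne_top hfin) hstrip
        _ = (2*t/(Real.sqrt (1-ρ^2) * Real.sqrt (2*π))) * p := by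
            rw [ENNReal.toReal_mul, ENNReal.toReal_ofReal (by positivity), hpdef]
        _ ≤ (pbar / Real.sqrt (3*β)) * p := mul_le_mul_of_nonneg_right hM hp0.le
        _ = p * pbar / Real.sqrt (3*β) := by ring
    have hmain := main_est δ L c β pbar p n qf hδ0 hL hβdef hp0 hpbar0 hlogpbar hplow hpup
      hc0 hc1 hc2 cond3 hq0 hqp hq2
    have hSum0 : 0 ≤ ∑ k ∈ Finset.range (n / 4 + 1), (n.choose k : ℝ) * qf k ^ (δ * (n:ℝ)) :=
      Finset.sum_nonneg fun k _ => mul_nonneg (Nat.cast_nonneg _)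
        (Real.rpow_nonneg (hq0 k) _)
    have hg : ((2:ℝ)^n * p ^ (δ*(n:ℝ))) ^ 2 = (2:ℝ)^n * ((2:ℝ)^n * p ^ (2*(δ*(n:ℝ)))) := by
      rw [show (2*(δ*(n:ℝ))) = δ*(n:ℝ) + δ*(n:ℝ) by ring, Real.rpow_add hp0]
      ring
    rw [Real.norm_eq_abs, Real.norm_eq_abs,
      abs_of_nonneg (mul_nonneg (by positivity) hSum0), abs_of_nonneg (sq_nonneg _)]
    calc (2:ℝ)^n * ∑ k ∈ Finset.range (n / 4 + 1), (n.choose k : ℝ) * qf k ^ (δ * (n:ℝ))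
        ≤ (2:ℝ)^n * ((Real.exp (-(5*δ*L/8) * n) + Real.exp (-(1/200:ℝ) * n)) *
            (2:ℝ)^n * p ^ (2*(δ*(n:ℝ)))) := by
          apply mul_le_mul_of_nonneg_left _ (by positivity)
          exact hmain
      _ = (Real.exp (-(5*δ*L/8) * n) + Real.exp (-(1/200:ℝ) * n)) *
            ((2:ℝ)^n * p ^ (δ*(n:ℝ)))^2 := by
          rw [hg]
          ring
      _ ≤ cc * ((2:ℝ)^n * p ^ (δ*(n:ℝ)))^2 :=
          mul_le_mul_of_nonneg_right hφn.le (sq_nonneg _)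
  refine ⟨part1, ?_⟩
  -- part 2 : reindex
  have heq2 : (fun n : ℕ => (2 : ℝ) ^ n * ∑ k ∈ Finset.Icc ((3 * n + 3) / 4) n,
      (n.choose k : ℝ) * ((corrPair (1 - 2 * (k : ℝ) / (n : ℝ)))
        {p : ℝ × ℝ | |Real.sqrt n * p.1| ≤ ε n ∧ |Real.sqrt n * p.2| ≤ ε n}).toReal
        ^ (δ * n : ℝ))
      =ᶠ[atTop]
      (fun n : ℕ => (2 : ℝ) ^ n * ∑ k ∈ Finset.range (n / 4 + 1),
      (n.choose k : ℝ) * ((corrPair (1 - 2 * (k : ℝ) / (n : ℝ)))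
        {p : ℝ × ℝ | |Real.sqrt n * p.1| ≤ ε n ∧ |Real.sqrt n * p.2| ≤ ε n}).toReal
        ^ (δ * n : ℝ)) := by
    filter_upwards [eventually_ge_atTop 1] with n hn1
    have hN0 : (0:ℝ) < n := by exact_mod_cast hn1
    rw [hseteqP n hn1]
    congr 1
    apply Finset.sum_nbij' (fun k => n - k) (fun k => n - k)
    · intro a ha
      simp only [Finset.mem_Icc, Finset.mem_range] at *
      omega
    · intro a ha
      simp only [Finset.mem_Icc, Finset.mem_range] at *
      omega
    · intro a ha
      simp only [Finset.mem_Icc] at ha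
      omega
    · intro a ha
      simp only [Finset.mem_range] at ha
      omega
    · intro a ha
      simp only [Finset.mem_Icc] at ha
      have hcast : ((n - a : ℕ) : ℝ) = (n:ℝ) - (a:ℝ) := by
        rw [Nat.cast_sub ha.2]
      rw [Nat.choose_symm ha.2]
      congr 2
      rw [hcast]
      have hneg : 1 - 2 * ((n:ℝ) - (a:ℝ)) / (n:ℝ) = -(1 - 2 * (a:ℝ) / (n:ℝ)) := by
        field_simp
        ring
      rw [hneg, corrPair_neg]
  exact heq2.trans_isLittleO part1
end

section
/- For any vectors X_1, …, X_N ∈ ℝ^m there exists a signing σ ∈ {−1,+1}^N such that |Σ_{i=1}^N σ_i X_i|_∞ ≤ max over subsets S ⊆ {1, …, N} with |S| = m of Σ_{j ∈ S} |X_j|_∞. -/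
open Finset

lemma key_vertex (m N : ℕ) (X : Fin N → Fin m → ℝ) :
    ∃ x : Fin N → ℝ, (∀ i, |x i| ≤ 1) ∧ (∑ i, x i • X i = 0) ∧
      ((Finset.univ.filter (fun i => |x i| ≤ 1 ∧ |x i| ≠ 1)).card ≤ min m N) := by
  classical
  set P : ℕ → Prop := fun n => ∃ x : Fin N → ℝ, (∀ i, |x i| ≤ 1) ∧ (∑ i, x i • X i = 0) ∧
      (Finset.univ.filter (fun i => |x i| ≤ 1 ∧ |x i| ≠ 1)).card = n with hP
  have hex : ∃ n, P n := by
    refine ⟨_, (0 : Fin N → ℝ), by simp, by simp, rfl⟩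
  obtain ⟨x, hx1, hx2, hx3⟩ := Nat.find_spec hex
  set T := Finset.univ.filter (fun i => |x i| ≤ 1 ∧ |x i| ≠ 1) with hT
  refine ⟨x, hx1, hx2, ?_⟩
  by_contra hlt
  push_neg at hlt
  have hlt' : min m N < T.card := hlt
  have hTN : T.card ≤ N := (Finset.card_filter_le _ _).trans (by simp)
  have hmT : m < T.card := by omega
  -- membership facts
  have hmemT : ∀ i, i ∈ T ↔ |x i| < 1 := by
    intro i
    simp only [hT, Finset.mem_filter, Finset.mem_univ, true_and]
    constructor
    · rintro ⟨h1, h2⟩; exact lt_of_le_of_ne h1 h2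
    · intro h; exact ⟨le_of_lt h, ne_of_lt h⟩
  -- linear dependence among (X j)_{j ∈ T}
  have hnli : ¬ LinearIndependent ℝ (fun j : T => X j) := by
    intro h
    have := LinearIndependent.fintype_card_le_finrank h
    simp only [Module.finrank_fintype_fun_eq_card, Fintype.card_fin,
      Fintype.card_coe] at this
    omega
  obtain ⟨g, hg0, j0, hj0⟩ := Fintype.not_linearIndependent_iff.mp hnli
  set c : Fin N → ℝ := fun i => if h : i ∈ T then g ⟨i, h⟩ else 0 with hc
  have hcT : ∀ i, c i ≠ 0 → i ∈ T := by
    intro i h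
    by_contra hiT
    simp [hc, hiT] at h
  have hcsum : ∑ i, c i • X i = 0 := by
    have h1 : ∑ i, c i • X i = ∑ i ∈ T, c i • X i :=
      (Finset.sum_subset (Finset.subset_univ T) (fun i _ hi => by simp [hc, hi])).symm
    rw [h1, ← Finset.sum_coe_sort T (fun i => c i • X i)]
    rw [← hg0]
    refine Finset.sum_congr rfl (fun j _ => ?_)
    have : c (↑j) = g j := by simp only [hc]; simp [j.2]
    rw [this]
  -- the set of moving coordinates
  set U := T.filter (fun i => c i ≠ 0) with hU
  have hj0U : (j0 : Fin N) ∈ U := by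
    rw [hU, Finset.mem_filter]
    refine ⟨j0.2, ?_⟩
    have : c (↑j0) = g j0 := by simp only [hc]; simp [j0.2]
    rw [this]; exact hj0
  -- the step size to the boundary
  set r : Fin N → ℝ := fun j => if 0 < c j then (1 - x j) / c j else (-1 - x j) / c j with hr
  obtain ⟨js, hjsU, hjsmin⟩ := Finset.exists_min_image U r ⟨j0, hj0U⟩
  have hrpos : ∀ j ∈ U, 0 < r j := by
    intro j hj
    rw [hU, Finset.mem_filter] at hj
    have hxj : |x j| < 1 := (hmemT j).mp hj.1
    have hxj1 : x j < 1 := (abs_lt.mp hxj).2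
    have hxj2 : -1 < x j := (abs_lt.mp hxj).1
    simp only [hr]
    rcases lt_or_gt_of_ne hj.2 with hneg | hpos
    · rw [if_neg (by linarith)]
      exact div_pos_of_neg_of_neg (by linarith) hneg
    · rw [if_pos hpos]
      exact div_pos (by linarith) hpos
  set t := r js with ht
  have htpos : 0 < t := hrpos js hjsU
  set y : Fin N → ℝ := fun i => x i + t * c i with hy
  have hyv : ∀ i, y i = x i + t * c i := fun i => rfl
  -- coordinates stay in [-1,1]
  have hy1 : ∀ i, |y i| ≤ 1 := by
    intro i
    by_cases hci : c i = 0
    · rw [hyv i, hci, mul_zero, add_zero]; exact hx1 i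
    · have hiU : i ∈ U := by
        rw [hU, Finset.mem_filter]; exact ⟨hcT i hci, hci⟩
      have hxi : |x i| < 1 := (hmemT i).mp (hcT i hci)
      have hxi1 : x i < 1 := (abs_lt.mp hxi).2
      have hxi2 : -1 < x i := (abs_lt.mp hxi).1
      have htle : t ≤ r i := hjsmin i hiU
      rw [abs_le, hyv i]
      rcases lt_or_gt_of_ne hci with hneg | hpos
      · have hri : r i = (-1 - x i) / c i := by
          simp only [hr]; rw [if_neg (by linarith)]
        have h1 : r i * c i = -1 - x i := by
          rw [hri, div_mul_cancel₀ _ (ne_of_lt hneg)]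
        have h2 : r i * c i ≤ t * c i :=
          mul_le_mul_of_nonpos_right htle (le_of_lt hneg)
        constructor
        · linarith
        · nlinarith [mul_nonpos_of_nonneg_of_nonpos (le_of_lt htpos) (le_of_lt hneg)]
      · have hri : r i = (1 - x i) / c i := by
          simp only [hr]; rw [if_pos hpos]
        have h1 : r i * c i = 1 - x i := by
          rw [hri, div_mul_cancel₀ _ (ne_of_gt hpos)]
        have h2 : t * c i ≤ r i * c i := mul_le_mul_of_nonneg_right htle (le_of_lt hpos)
        constructor
        · nlinarith [mul_pos htpos hpos]
        · linarith
  -- the sum is still zero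
  have hy2 : ∑ i, y i • X i = 0 := by
    have h0 : ∀ i, y i • X i = x i • X i + t • (c i • X i) := by
      intro i; rw [hyv i, add_smul, mul_smul]
    rw [Finset.sum_congr rfl (fun i _ => h0 i), Finset.sum_add_distrib, hx2,
      ← Finset.smul_sum, hcsum, smul_zero, add_zero]
  -- js hits the boundary
  have hjs_bd : |y js| = 1 := by
    rw [hU, Finset.mem_filter] at hjsU
    rcases lt_or_gt_of_ne hjsU.2 with hneg | hpos
    · have hv : y js = -1 := by
        rw [hyv js]
        have : t = (-1 - x js) / c js := by
          rw [ht]; simp only [hr]; rw [if_neg (by linarith)]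
        rw [this, div_mul_cancel₀ _ (ne_of_lt hneg)]
        ring
      rw [hv]; simp
    · have hv : y js = 1 := by
        rw [hyv js]
        have : t = (1 - x js) / c js := by
          rw [ht]; simp only [hr]; rw [if_pos hpos]
        rw [this, div_mul_cancel₀ _ (ne_of_gt hpos)]
        ring
      rw [hv]; simp
  -- fractional set strictly decreases
  have hsub : Finset.univ.filter (fun i => |y i| ≤ 1 ∧ |y i| ≠ 1) ⊂ T := by
    constructor
    · intro i hi
      rw [Finset.mem_filter] at hi
      rw [hmemT]
      by_contra hge
      push_neg at hge
      have hxi1 : |x i| = 1 := le_antisymm (hx1 i) hge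
      have hiT : i ∉ T := by rw [hmemT]; simp [hxi1]
      have hci : c i = 0 := by
        by_contra hci; exact hiT (hcT i hci)
      have hyx : y i = x i := by rw [hyv i, hci, mul_zero, add_zero]
      rw [hyx, hxi1] at hi
      exact hi.2.2 rfl
    · intro hsup
      have : (js : Fin N) ∈ Finset.univ.filter (fun i => |y i| ≤ 1 ∧ |y i| ≠ 1) := by
        apply hsup
        rw [hU, Finset.mem_filter] at hjsU
        exact hjsU.1
      rw [Finset.mem_filter] at this
      exact this.2.2 hjs_bd
  have hcard : (Finset.univ.filter (fun i => |y i| ≤ 1 ∧ |y i| ≠ 1)).card < Nat.find hex := by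
    rw [← hx3, hT]
    exact Finset.card_lt_card hsub
  exact Nat.find_min hex hcard ⟨y, hy1, hy2, rfl⟩

/-- **REDUCE.** For any vectors `X_1, …, X_N ∈ ℝ^m` there is a signing
`σ ∈ {±1}^N` with `‖∑ σ_i X_i‖_∞` at most the maximum, over subsets `S ⊆ [N]` of size `m`
(of size `min m N` when `N < m`, i.e. the whole index set), of `∑_{j ∈ S} ‖X_j‖_∞`. -/
theorem reduce_exists_signing (m N : ℕ) (X : Fin N → Fin m → ℝ) :
    ∃ σ : Fin N → ℝ, (∀ i, σ i = 1 ∨ σ i = -1) ∧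
      ‖∑ i, σ i • X i‖ ≤
        (Finset.powersetCard (min m N) (Finset.univ : Finset (Fin N))).sup'
          (Finset.powersetCard_nonempty.mpr (by simp))
          (fun S => ∑ j ∈ S, ‖X j‖) := by
  classical
  obtain ⟨x, hx1, hx2, hx3⟩ := key_vertex m N X
  set T := Finset.univ.filter (fun i => |x i| ≤ 1 ∧ |x i| ≠ 1) with hT
  set σ : Fin N → ℝ := fun i => if x i < 0 then -1 else 1 with hσ
  have hσv : ∀ i, σ i = if x i < 0 then -1 else 1 := fun i => rfl
  refine ⟨σ, fun i => by rw [hσv i]; split <;> simp, ?_⟩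
  -- the difference is supported on T and bounded by 1
  have hd0 : ∀ i, i ∉ T → σ i - x i = 0 := by
    intro i hi
    rw [hT, Finset.mem_filter] at hi
    push_neg at hi
    have h1 : |x i| = 1 := hi (Finset.mem_univ i) (hx1 i)
    rcases abs_eq (by norm_num : (0:ℝ) ≤ 1) |>.mp h1 with h | h
    · rw [hσv i, if_neg (by rw [h]; norm_num), h]; ring
    · rw [hσv i, if_pos (by rw [h]; norm_num), h]; ring
  have hd1 : ∀ i, |σ i - x i| ≤ 1 := by
    intro i
    have h1 := (abs_le.mp (hx1 i)).1
    have h2 := (abs_le.mp (hx1 i)).2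
    rw [hσv i]
    rcases lt_or_ge (x i) 0 with h | h
    · rw [if_pos h, abs_le]; constructor <;> linarith
    · rw [if_neg (not_lt.mpr h), abs_le]; constructor <;> linarith
  -- rewrite the signed sum
  have hsum : ∑ i, σ i • X i = ∑ i ∈ T, (σ i - x i) • X i := by
    have : ∑ i, σ i • X i = ∑ i, ((σ i - x i) • X i + x i • X i) := by
      refine Finset.sum_congr rfl (fun i _ => ?_)
      rw [← add_smul]; ring_nf
    rw [this, Finset.sum_add_distrib, hx2, add_zero]
    exact (Finset.sum_subset (Finset.subset_univ T)
      (fun i _ hi => by rw [hd0 i hi, zero_smul])).symm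
  -- extend T to a set S of size min m N
  obtain ⟨S, hTS, hSu, hScard⟩ := Finset.exists_subsuperset_card_eq
    (Finset.subset_univ T) hx3 (by simp [min_le_right])
  have hSmem : S ∈ Finset.powersetCard (min m N) (Finset.univ : Finset (Fin N)) := by
    rw [Finset.mem_powersetCard]; exact ⟨hSu, hScard⟩
  calc ‖∑ i, σ i • X i‖ = ‖∑ i ∈ T, (σ i - x i) • X i‖ := by rw [hsum]
    _ ≤ ∑ i ∈ T, ‖(σ i - x i) • X i‖ := norm_sum_le _ _
    _ ≤ ∑ i ∈ T, ‖X i‖ := by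
        refine Finset.sum_le_sum (fun i _ => ?_)
        rw [norm_smul, Real.norm_eq_abs]
        calc |σ i - x i| * ‖X i‖ ≤ 1 * ‖X i‖ :=
              mul_le_mul_of_nonneg_right (hd1 i) (norm_nonneg _)
          _ = ‖X i‖ := one_mul _
    _ ≤ ∑ i ∈ S, ‖X i‖ := Finset.sum_le_sum_of_subset_of_nonneg hTS
          (fun i _ _ => norm_nonneg _)
    _ ≤ _ := Finset.le_sup' (fun S => ∑ j ∈ S, ‖X j‖) hSmem
end

section
/- There exists an absolute constant c* > 0 such that for every dimension m ≥ 1, every α > 0, and every vector ν ∈ ℝ^m, if u is a random vector with triangular distribution on [−α, α]^m, then E[ |⟨ν, u⟩| ] ≥ c*·α·|ν|_2. -/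
open MeasureTheory ProbabilityTheory

/-- The uniform probability measure on the cube `[0, α]^m`. -/
noncomputable def unifCube (m : ℕ) (α : ℝ) : Measure (Fin m → ℝ) :=
  Measure.pi fun _ : Fin m => (ENNReal.ofReal α)⁻¹ • volume.restrict (Set.Icc 0 α)

/-- The triangular distribution on `[−α, α]^m`: the law of the difference of two independent
random vectors, each uniform on `[0, α]^m`. -/
noncomputable def triCube (m : ℕ) (α : ℝ) : Measure (Fin m → ℝ) :=
  Measure.map (fun p => p.1 - p.2) ((unifCube m α).prod (unifCube m α))

/-- The uniform probability measure on `[0, α]`. -/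
noncomputable def unif1 (α : ℝ) : Measure ℝ :=
  (ENNReal.ofReal α)⁻¹ • volume.restrict (Set.Icc 0 α)

/-- The triangular distribution on `[−α, α]`. -/
noncomputable def tri1 (α : ℝ) : Measure ℝ :=
  ((unif1 α).prod (unif1 α)).map (fun q => q.1 - q.2)

lemma unif1_prob {α : ℝ} (hα : 0 < α) : IsProbabilityMeasure (unif1 α) := by
  constructor
  simp [unif1, Real.volume_Icc, Measure.smul_apply, smul_eq_mul]
  rw [ENNReal.inv_mul_cancel (by simpa using hα) ENNReal.ofReal_ne_top]

lemma tri1_prob {α : ℝ} (hα : 0 < α) : IsProbabilityMeasure (tri1 α) := by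
  haveI := unif1_prob hα
  exact Measure.isProbabilityMeasure_map ((measurable_fst.sub measurable_snd).aemeasurable)

lemma unif1_integrable {α : ℝ} (hα : 0 < α) (k : ℕ) :
    Integrable (fun x => x ^ k) (unif1 α) := by
  rw [unif1]
  refine Integrable.smul_measure ?_ (ENNReal.inv_ne_top.mpr (by simpa using hα))
  exact (continuous_pow k).continuousOn.integrableOn_compact isCompact_Icc

lemma unif1_moment {α : ℝ} (hα : 0 < α) (k : ℕ) :
    ∫ x, x ^ k ∂(unif1 α) = α ^ k / (k + 1) := by
  rw [unif1, integral_smul_measure, ENNReal.toReal_inv, ENNReal.toReal_ofReal hα.le,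
    MeasureTheory.integral_Icc_eq_integral_Ioc, ← intervalIntegral.integral_of_le hα.le,
    integral_pow]
  have : (α : ℝ) ≠ 0 := hα.ne'
  field_simp [pow_succ]
  rw [smul_eq_mul, zero_pow (Nat.succ_ne_zero k), sub_zero, pow_succ]
  field_simp

section AddPow

variable {Ω₁ Ω₂ : Type*} [MeasurableSpace Ω₁] [MeasurableSpace Ω₂]

lemma integrable_add_pow (P : Measure Ω₁) (Q : Measure Ω₂)
    [IsProbabilityMeasure P] [IsProbabilityMeasure Q]
    {f : Ω₁ → ℝ} {g : Ω₂ → ℝ}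
    (hf : ∀ k, k ≤ 4 → Integrable (fun a => f a ^ k) P)
    (hg : ∀ k, k ≤ 4 → Integrable (fun b => g b ^ k) Q)
    {k : ℕ} (hk : k ≤ 4) :
    Integrable (fun z : Ω₁ × Ω₂ => (f z.1 + g z.2) ^ k) (P.prod Q) := by
  have h : (fun z : Ω₁ × Ω₂ => (f z.1 + g z.2) ^ k) =
      fun z => ∑ j ∈ Finset.range (k + 1),
        (f z.1 ^ j * g z.2 ^ (k - j)) * (k.choose j : ℝ) := by
    funext z; rw [add_pow]
  rw [h]
  refine integrable_finset_sum _ (fun j hj => ?_)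
  have hj' : j ≤ 4 := le_trans (Nat.lt_succ_iff.mp (Finset.mem_range.mp hj)) hk
  exact ((hf j hj').mul_prod (hg (k - j) (le_trans (Nat.sub_le _ _) hk))).mul_const _

lemma integral_add_pow (P : Measure Ω₁) (Q : Measure Ω₂)
    [IsProbabilityMeasure P] [IsProbabilityMeasure Q]
    {f : Ω₁ → ℝ} {g : Ω₂ → ℝ}
    (hf : ∀ k, k ≤ 4 → Integrable (fun a => f a ^ k) P)
    (hg : ∀ k, k ≤ 4 → Integrable (fun b => g b ^ k) Q)
    {k : ℕ} (hk : k ≤ 4) :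
    ∫ z, (f z.1 + g z.2) ^ k ∂(P.prod Q) =
      ∑ j ∈ Finset.range (k + 1),
        (k.choose j : ℝ) * (∫ a, f a ^ j ∂P) * (∫ b, g b ^ (k - j) ∂Q) := by
  have h : ∀ z : Ω₁ × Ω₂, (f z.1 + g z.2) ^ k =
      ∑ j ∈ Finset.range (k + 1),
        (f z.1 ^ j * g z.2 ^ (k - j)) * (k.choose j : ℝ) := by
    intro z; rw [add_pow]
  simp_rw [h]
  rw [integral_finset_sum]
  · refine Finset.sum_congr rfl (fun j hj => ?_)
    rw [integral_mul_const, integral_prod_mul (f := fun a => f a ^ j) (g := fun b => g b ^ (k - j))]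
    ring
  · intro j hj
    have hj' : j ≤ 4 := le_trans (Nat.lt_succ_iff.mp (Finset.mem_range.mp hj)) hk
    exact ((hf j hj').mul_prod (hg (k - j) (le_trans (Nat.sub_le _ _) hk))).mul_const _

end AddPow

lemma neg_int {α : ℝ} (hα : 0 < α) : ∀ k, k ≤ 4 →
    Integrable (fun b : ℝ => (-b) ^ k) (unif1 α) := by
  intro k _
  have h : (fun b : ℝ => (-b) ^ k) = fun b : ℝ => (-1 : ℝ) ^ k * b ^ k :=
    funext fun b => by rw [neg_pow]
  rw [h]
  exact (unif1_integrable hα k).const_mul _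

lemma neg_moment {α : ℝ} (hα : 0 < α) (k : ℕ) :
    ∫ b, (-b) ^ k ∂(unif1 α) = (-1) ^ k * (α ^ k / (k + 1)) := by
  have h : (fun b : ℝ => (-b) ^ k) = fun b : ℝ => (-1 : ℝ) ^ k * b ^ k :=
    funext fun b => by rw [neg_pow]
  rw [show ∫ b, (-b) ^ k ∂(unif1 α) = ∫ b, (-1 : ℝ) ^ k * b ^ k ∂(unif1 α) from by rw [← h],
    integral_const_mul, unif1_moment hα]

lemma tri1_integrable {α : ℝ} (hα : 0 < α) (k : ℕ) (hk : k ≤ 4) :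
    Integrable (fun x => x ^ k) (tri1 α) := by
  haveI := unif1_prob hα
  rw [tri1, integrable_map_measure ((continuous_pow _).measurable).aestronglyMeasurable
    ((show Measurable (fun q : ℝ × ℝ => q.1 - q.2) from measurable_fst.sub measurable_snd).aemeasurable)]
  have h := integrable_add_pow (unif1 α) (unif1 α) (f := fun a => a) (g := fun b => -b)
    (fun k hk => unif1_integrable hα k) (neg_int hα) hk
  refine h.congr (Filter.Eventually.of_forall fun z => ?_)
  simp [sub_eq_add_neg, Function.comp]

lemma tri1_moment_eq {α : ℝ} (hα : 0 < α) (k : ℕ) (hk : k ≤ 4) :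
    ∫ x, x ^ k ∂(tri1 α) =
      ∑ j ∈ Finset.range (k + 1),
        (k.choose j : ℝ) * (α ^ j / (j + 1)) *
          ((-1) ^ (k - j) * (α ^ (k - j) / (((k - j : ℕ) : ℝ) + 1))) := by
  haveI := unif1_prob hα
  rw [tri1, integral_map ((show Measurable (fun q : ℝ × ℝ => q.1 - q.2) from measurable_fst.sub measurable_snd).aemeasurable)
    ((continuous_pow _).measurable).aestronglyMeasurable]
  have : ∀ q : ℝ × ℝ, (q.1 - q.2) ^ k = ((fun a : ℝ => a) q.1 + (fun b : ℝ => -b) q.2) ^ k := by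
    intro q; simp [sub_eq_add_neg]
  simp_rw [this]
  rw [integral_add_pow (unif1 α) (unif1 α)
    (fun k hk => unif1_integrable hα k) (neg_int hα) hk]
  refine Finset.sum_congr rfl fun j hj => ?_
  rw [unif1_moment hα, neg_moment hα]

lemma tri1_m1 {α : ℝ} (hα : 0 < α) : ∫ x, x ^ 1 ∂(tri1 α) = 0 := by
  rw [tri1_moment_eq hα 1 (by norm_num)]
  simp [Finset.sum_range_succ]

lemma tri1_m2 {α : ℝ} (hα : 0 < α) : ∫ x, x ^ 2 ∂(tri1 α) = α ^ 2 / 6 := by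
  rw [tri1_moment_eq hα 2 (by norm_num)]
  simp [Finset.sum_range_succ, Nat.choose]
  ring

lemma tri1_m3 {α : ℝ} (hα : 0 < α) : ∫ x, x ^ 3 ∂(tri1 α) = 0 := by
  rw [tri1_moment_eq hα 3 (by norm_num)]
  simp [Finset.sum_range_succ, Nat.choose]
  ring

lemma tri1_m4 {α : ℝ} (hα : 0 < α) : ∫ x, x ^ 4 ∂(tri1 α) = α ^ 4 / 15 := by
  rw [tri1_moment_eq hα 4 (by norm_num)]
  simp [Finset.sum_range_succ, Nat.choose]
  ring

lemma pi_moments (ρ : Measure ℝ) [IsProbabilityMeasure ρ]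
    (hint : ∀ k, k ≤ 4 → Integrable (fun x => x ^ k) ρ)
    (v : ℝ)
    (h1 : ∫ x, x ^ 1 ∂ρ = 0) (h2 : ∫ x, x ^ 2 ∂ρ = v)
    (h3 : ∫ x, x ^ 3 ∂ρ = 0) (h4 : ∫ x, x ^ 4 ∂ρ ≤ 3 * v ^ 2) :
    ∀ (n : ℕ) (ν : Fin n → ℝ),
      (∀ k, k ≤ 4 →
        Integrable (fun x => (∑ i, ν i * x i) ^ k) (Measure.pi fun _ : Fin n => ρ)) ∧
      (∫ x, (∑ i, ν i * x i) ^ 1 ∂(Measure.pi fun _ : Fin n => ρ)) = 0 ∧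
      (∫ x, (∑ i, ν i * x i) ^ 2 ∂(Measure.pi fun _ : Fin n => ρ)) = v * ∑ i, ν i ^ 2 ∧
      (∫ x, (∑ i, ν i * x i) ^ 3 ∂(Measure.pi fun _ : Fin n => ρ)) = 0 ∧
      (∫ x, (∑ i, ν i * x i) ^ 4 ∂(Measure.pi fun _ : Fin n => ρ))
        ≤ 3 * v ^ 2 * (∑ i, ν i ^ 2) ^ 2 := by
  have hv : 0 ≤ v := h2 ▸ integral_nonneg (fun x => sq_nonneg x)
  intro n
  induction n with
  | zero =>
      intro ν
      simp only [Finset.univ_eq_empty, Finset.sum_empty]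
      refine ⟨fun k hk => ?_, ?_, ?_, ?_, ?_⟩ <;>
        simp [integrable_const, le_refl]
  | succ n ih =>
      intro ν
      set πn : Measure (Fin n → ℝ) := Measure.pi fun _ : Fin n => ρ with hπn
      set c : ℝ := ν 0
      set ν' : Fin n → ℝ := fun j => ν j.succ with hν'
      obtain ⟨ihint, ih1, ih2, ih3, ih4⟩ := ih ν'
      have hfint : ∀ k, k ≤ 4 → Integrable (fun a : ℝ => (c * a) ^ k) ρ := by
        intro k hk
        simpa [mul_pow] using (hint k hk).const_mul (c ^ k)
      have hP := measurePreserving_piFinSuccAbove (fun _ : Fin (n + 1) => ρ) 0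
      set e := MeasurableEquiv.piFinSuccAbove (fun _ : Fin (n + 1) => ℝ) 0 with he
      have hcomp : ∀ (k : ℕ) (x : Fin (n + 1) → ℝ),
          (fun z : ℝ × (Fin n → ℝ) => (c * z.1 + ∑ j, ν' j * z.2 j) ^ k) (e x)
            = (∑ i, ν i * x i) ^ k := by
        intro k x
        have : (∑ i, ν i * x i) = c * x 0 + ∑ j, ν' j * x j.succ := by
          rw [Fin.sum_univ_succ]
        rw [this]
        rfl
      have hgint : ∀ k, k ≤ 4 →
          Integrable (fun z : ℝ × (Fin n → ℝ) => (c * z.1 + ∑ j, ν' j * z.2 j) ^ k)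
            (ρ.prod πn) :=
        fun k hk => integrable_add_pow ρ πn hfint ihint hk
      have hInt : ∀ k, k ≤ 4 →
          Integrable (fun x => (∑ i, ν i * x i) ^ k) (Measure.pi fun _ : Fin (n + 1) => ρ) := by
        intro k hk
        have hcompi := (hP.integrable_comp_emb e.measurableEmbedding
          (g := fun z : ℝ × (Fin n → ℝ) => (c * z.1 + ∑ j, ν' j * z.2 j) ^ k)).mpr (hgint k hk)
        have h' : (fun z : ℝ × (Fin n → ℝ) => (c * z.1 + ∑ j, ν' j * z.2 j) ^ k) ∘ ⇑e
            = fun x => (∑ i, ν i * x i) ^ k := funext fun x => hcomp k x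
        rw [h'] at hcompi
        exact hcompi
      have hIeq : ∀ k, k ≤ 4 →
          (∫ x, (∑ i, ν i * x i) ^ k ∂(Measure.pi fun _ : Fin (n + 1) => ρ))
            = ∑ j ∈ Finset.range (k + 1),
                (k.choose j : ℝ) * (∫ a, (c * a) ^ j ∂ρ) *
                  (∫ y, (∑ i, ν' i * y i) ^ (k - j) ∂πn) := by
        intro k hk
        rw [← integral_add_pow ρ πn hfint ihint hk, ← hP.integral_comp e.measurableEmbedding]
        exact integral_congr_ae (Filter.Eventually.of_forall fun x => (hcomp k x).symm)
      have hm : ∀ j, ∫ a : ℝ, (c * a) ^ j ∂ρ = c ^ j * ∫ a, a ^ j ∂ρ := by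
        intro j; simp_rw [mul_pow]; exact integral_const_mul _ _
      have hρ1 : ∫ a : ℝ, a ∂ρ = 0 := by simpa using h1
      have hT1 : ∫ y, (∑ i, ν' i * y i) ∂πn = 0 := by simpa using ih1
      have hc1 : ∫ a : ℝ, c * a ∂ρ = 0 := by
        rw [integral_const_mul, hρ1, mul_zero]
      have hm0 : ∫ a : ℝ, (c * a) ^ 0 ∂ρ = 1 := by simp
      have hT0 : (∫ y, (∑ i, ν' i * y i) ^ 0 ∂πn) = 1 := by simp
      have hsum : (∑ i, ν i ^ 2) = c ^ 2 + ∑ i, ν' i ^ 2 := by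
        rw [Fin.sum_univ_succ]
      refine ⟨hInt, ?_, ?_, ?_, ?_⟩
      · rw [hIeq 1 (by norm_num)]
        simp only [Finset.sum_range_succ]
        norm_num [hm, hm0, hT0, h1, ih1, hρ1, hT1, hc1, integral_const_mul]
      · rw [hIeq 2 (by norm_num), hsum]
        simp only [Finset.sum_range_succ]
        norm_num [hm, hm0, hT0, h1, h2, ih1, ih2, hρ1, hT1, hc1, integral_const_mul]
        try ring
      · rw [hIeq 3 (by norm_num)]
        simp only [Finset.sum_range_succ]
        norm_num [hm, hm0, hT0, h1, h2, h3, ih1, ih2, ih3, hρ1, hT1, hc1, integral_const_mul]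
      · rw [hIeq 4 (by norm_num), hsum]
        simp only [Finset.sum_range_succ]
        norm_num [hm, hm0, hT0, h1, h2, h3, ih1, ih2, ih3, hρ1, hT1, hc1, integral_const_mul]
        have hK' : (0:ℝ) ≤ ∑ i, ν' i ^ 2 := Finset.sum_nonneg fun i _ => sq_nonneg _
        have hch : ((Nat.choose 4 2 : ℕ) : ℝ) = 6 := by norm_num [Nat.choose]
        rw [hch]
        nlinarith [ih4, h4, sq_nonneg c, hv, hK', mul_nonneg hv hK',
          mul_le_mul_of_nonneg_left h4 (sq_nonneg (c ^ 2))]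

/-- Cauchy–Schwarz for integrals of nonnegative functions. -/
lemma integral_cs {Ω : Type*} [MeasurableSpace Ω] (μ : Measure Ω) {f g : Ω → ℝ}
    (hfm : AEStronglyMeasurable f μ) (hgm : AEStronglyMeasurable g μ)
    (hf0 : ∀ x, 0 ≤ f x) (hg0 : ∀ x, 0 ≤ g x)
    (hf2 : Integrable (fun x => f x ^ 2) μ) (hg2 : Integrable (fun x => g x ^ 2) μ) :
    (∫ x, f x * g x ∂μ) ^ 2 ≤ (∫ x, f x ^ 2 ∂μ) * (∫ x, g x ^ 2 ∂μ) := by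
  have hpq : Real.HolderConjugate 2 2 := Real.HolderConjugate.two_two
  have h2 : (ENNReal.ofReal (2:ℝ)) = 2 := by norm_num
  have hfL : MemLp f (ENNReal.ofReal (2:ℝ)) μ := by
    rw [h2]; exact (memLp_two_iff_integrable_sq hfm).mpr hf2
  have hgL : MemLp g (ENNReal.ofReal (2:ℝ)) μ := by
    rw [h2]; exact (memLp_two_iff_integrable_sq hgm).mpr hg2
  have h := MeasureTheory.integral_mul_le_Lp_mul_Lq_of_nonneg hpq
    (Filter.Eventually.of_forall hf0) (Filter.Eventually.of_forall hg0) hfL hgL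
  have hconv : ∀ x : ℝ, x ^ (2:ℝ) = x ^ (2:ℕ) := fun x => by
    rw [show (2:ℝ) = ((2:ℕ):ℝ) by norm_num, Real.rpow_natCast]
  simp_rw [hconv] at h
  set A := ∫ x, f x ^ 2 ∂μ
  set B := ∫ x, g x ^ 2 ∂μ
  have hA0 : 0 ≤ A := integral_nonneg fun x => sq_nonneg _
  have hB0 : 0 ≤ B := integral_nonneg fun x => sq_nonneg _
  rw [← Real.sqrt_eq_rpow, ← Real.sqrt_eq_rpow] at h
  have hI0 : 0 ≤ ∫ x, f x * g x ∂μ :=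
    integral_nonneg fun x => mul_nonneg (hf0 x) (hg0 x)
  calc (∫ x, f x * g x ∂μ) ^ 2 ≤ (Real.sqrt A * Real.sqrt B) ^ 2 :=
        pow_le_pow_left₀ hI0 h 2
    _ = A * B := by rw [mul_pow, Real.sq_sqrt hA0, Real.sq_sqrt hB0]

lemma triCube_eq {α : ℝ} (hα : 0 < α) (m : ℕ) :
    triCube m α = Measure.pi fun _ : Fin m => tri1 α := by
  haveI := unif1_prob hα
  haveI := tri1_prob hα
  have h1 := (measurePreserving_arrowProdEquivProdArrow ℝ ℝ (Fin m)
    (fun _ => unif1 α) (fun _ => unif1 α)).map_eq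
  have hsub : Measurable (fun p : (Fin m → ℝ) × (Fin m → ℝ) => p.1 - p.2) :=
    measurable_fst.sub measurable_snd
  have h2 := (measurePreserving_pi (fun _ : Fin m => (unif1 α).prod (unif1 α))
    (fun _ : Fin m => tri1 α) (f := fun _ r => r.1 - r.2)
    (fun _ => ⟨measurable_fst.sub measurable_snd, rfl⟩)).map_eq
  have hcube : unifCube m α = Measure.pi fun _ : Fin m => unif1 α := rfl
  rw [triCube, hcube, ← h1,
    Measure.map_map hsub (MeasurableEquiv.arrowProdEquivProdArrow ℝ ℝ (Fin m)).measurable]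
  have hfun : (fun p : (Fin m → ℝ) × (Fin m → ℝ) => p.1 - p.2) ∘
      ⇑(MeasurableEquiv.arrowProdEquivProdArrow ℝ ℝ (Fin m))
      = fun (q : Fin m → ℝ × ℝ) (i : Fin m) => (q i).1 - (q i).2 := by
    funext q
    rfl
  rw [hfun, h2]

/-- **Khintchine-type bound.** There is an absolute constant `c* > 0` such
that for every `m ≥ 1`, `α > 0` and `ν ∈ ℝ^m`, if `u ∼ Tri[−α, α]^m` then
`E[|⟨ν, u⟩|] ≥ c* α ‖ν‖₂`. -/
theorem triangular_khintchine :
    ∃ cstar : ℝ, 0 < cstar ∧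
      ∀ m : ℕ, 0 < m → ∀ α : ℝ, 0 < α → ∀ ν : Fin m → ℝ,
        cstar * α * Real.sqrt (∑ i, ν i ^ 2)
          ≤ ∫ u, |∑ i, ν i * u i| ∂(triCube m α) := by
  refine ⟨1/5, by norm_num, fun m _ α hα ν => ?_⟩
  haveI := tri1_prob hα
  rw [triCube_eq hα m]
  set π : Measure (Fin m → ℝ) := Measure.pi fun _ : Fin m => tri1 α with hπ
  haveI : IsProbabilityMeasure π := by rw [hπ]; infer_instance
  have h4' : ∫ x, x ^ 4 ∂(tri1 α) ≤ 3 * (α ^ 2 / 6) ^ 2 := by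
    rw [tri1_m4 hα]
    nlinarith [pow_pos hα 4]
  obtain ⟨hInt, h1, h2, h3, h4⟩ := pi_moments (tri1 α)
    (fun k hk => tri1_integrable hα k hk) (α ^ 2 / 6)
    (tri1_m1 hα) (tri1_m2 hα) (tri1_m3 hα) h4' m ν
  set X : (Fin m → ℝ) → ℝ := fun x => ∑ i, ν i * x i with hX
  have hXm : Measurable X := by
    apply Finset.measurable_sum
    exact fun i _ => (measurable_pi_apply i).const_mul _
  set K : ℝ := ∑ i, ν i ^ 2 with hK
  have hK0 : 0 ≤ K := Finset.sum_nonneg fun i _ => sq_nonneg _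
  set I : ℝ := ∫ x, |X x| ∂π with hIdef
  have hI0 : 0 ≤ I := integral_nonneg fun x => abs_nonneg _
  set A2 : ℝ := ∫ x, X x ^ 2 ∂π with hA2def
  set A4 : ℝ := ∫ x, X x ^ 4 ∂π with hA4def
  set B : ℝ := ∫ x, |X x| ^ 3 ∂π with hBdef
  have hB0 : 0 ≤ B := integral_nonneg fun x => pow_nonneg (abs_nonneg _) 3
  have hA20 : 0 ≤ A2 := integral_nonneg fun x => sq_nonneg _
  -- integrabilities
  have hIab : Integrable (fun x => |X x|) π := by
    have := hInt 1 (by norm_num)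
    simp only [pow_one] at this
    exact this.abs
  have hIab3 : Integrable (fun x => |X x| ^ 3) π := by
    have := (hInt 3 (by norm_num)).abs
    refine this.congr (Filter.Eventually.of_forall fun x => ?_)
    show |X x ^ 3| = |X x| ^ 3
    exact abs_pow _ _
  -- first Cauchy-Schwarz : A2^2 ≤ I * B
  have cs1 : A2 ^ 2 ≤ I * B := by
    have key := integral_cs π (f := fun x => Real.sqrt |X x|)
      (g := fun x => |X x| * Real.sqrt |X x|)
      ((Real.continuous_sqrt.measurable.comp hXm.abs).aestronglyMeasurable)
      ((hXm.abs.mul (Real.continuous_sqrt.measurable.comp hXm.abs)).aestronglyMeasurable)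
      (fun x => Real.sqrt_nonneg _)
      (fun x => mul_nonneg (abs_nonneg _) (Real.sqrt_nonneg _))
      (by
        refine hIab.congr (Filter.Eventually.of_forall fun x => ?_)
        show |X x| = Real.sqrt |X x| ^ 2
        exact (Real.sq_sqrt (abs_nonneg _)).symm)
      (by
        refine hIab3.congr (Filter.Eventually.of_forall fun x => ?_)
        show |X x| ^ 3 = (|X x| * Real.sqrt |X x|) ^ 2
        rw [mul_pow, Real.sq_sqrt (abs_nonneg _)]
        ring)
    have e1 : ∫ x, Real.sqrt |X x| * (|X x| * Real.sqrt |X x|) ∂π = A2 := by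
      rw [hA2def]
      refine integral_congr_ae (Filter.Eventually.of_forall fun x => ?_)
      show Real.sqrt |X x| * (|X x| * Real.sqrt |X x|) = X x ^ 2
      have hss : Real.sqrt |X x| * Real.sqrt |X x| = |X x| :=
        Real.mul_self_sqrt (abs_nonneg _)
      calc Real.sqrt |X x| * (|X x| * Real.sqrt |X x|)
          = |X x| * (Real.sqrt |X x| * Real.sqrt |X x|) := by ring
        _ = |X x| * |X x| := by rw [hss]
        _ = X x ^ 2 := by rw [abs_mul_abs_self, sq]
    have e2 : ∫ x, Real.sqrt |X x| ^ 2 ∂π = I := by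
      rw [hIdef]
      exact integral_congr_ae (Filter.Eventually.of_forall fun x => by
        show Real.sqrt |X x| ^ 2 = |X x|
        exact Real.sq_sqrt (abs_nonneg _))
    have e3 : ∫ x, (|X x| * Real.sqrt |X x|) ^ 2 ∂π = B := by
      rw [hBdef]
      refine integral_congr_ae (Filter.Eventually.of_forall fun x => ?_)
      show (|X x| * Real.sqrt |X x|) ^ 2 = |X x| ^ 3
      rw [mul_pow, Real.sq_sqrt (abs_nonneg _)]
      ring
    rw [e1, e2, e3] at key
    exact key
  -- second Cauchy-Schwarz : B^2 ≤ A2 * A4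
  have cs2 : B ^ 2 ≤ A2 * A4 := by
    have key := integral_cs π (f := fun x => |X x|) (g := fun x => X x ^ 2)
      (hXm.abs.aestronglyMeasurable) ((hXm.pow_const 2).aestronglyMeasurable)
      (fun x => abs_nonneg _) (fun x => sq_nonneg _)
      (by
        refine (hInt 2 (by norm_num)).congr (Filter.Eventually.of_forall fun x => ?_)
        show X x ^ 2 = |X x| ^ 2
        exact (sq_abs _).symm)
      (by
        refine (hInt 4 (by norm_num)).congr (Filter.Eventually.of_forall fun x => ?_)
        show X x ^ 4 = (X x ^ 2) ^ 2
        ring)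
    have e1 : ∫ x, |X x| * X x ^ 2 ∂π = B := by
      rw [hBdef]
      refine integral_congr_ae (Filter.Eventually.of_forall fun x => ?_)
      show |X x| * X x ^ 2 = |X x| ^ 3
      rw [← sq_abs]
      ring
    have e2 : ∫ x, |X x| ^ 2 ∂π = A2 := by
      rw [hA2def]
      exact integral_congr_ae (Filter.Eventually.of_forall fun x => by
        show |X x| ^ 2 = X x ^ 2
        exact sq_abs _)
    have e3 : ∫ x, (X x ^ 2) ^ 2 ∂π = A4 := by
      rw [hA4def]
      exact integral_congr_ae (Filter.Eventually.of_forall fun x => by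
        show (X x ^ 2) ^ 2 = X x ^ 4
        ring)
    rw [e1, e2, e3] at key
    exact key
  -- moment values
  have hA2v : A2 = α ^ 2 / 6 * K := h2
  have hA4v : A4 ≤ 3 * (α ^ 2 / 6) ^ 2 * K ^ 2 := h4
  -- conclusion
  rcases eq_or_lt_of_le hK0 with hKz | hKpos
  · rw [← hKz, Real.sqrt_zero, mul_zero]
    exact hI0
  · have hA2pos : 0 < A2 := by rw [hA2v]; positivity
    have step3 : A2 ^ 4 ≤ I ^ 2 * (A2 * A4) := by
      have s1 : (A2 ^ 2) ^ 2 ≤ (I * B) ^ 2 := pow_le_pow_left₀ (sq_nonneg _) cs1 2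
      have s2 : I ^ 2 * B ^ 2 ≤ I ^ 2 * (A2 * A4) :=
        mul_le_mul_of_nonneg_left cs2 (sq_nonneg I)
      calc A2 ^ 4 = (A2 ^ 2) ^ 2 := by ring
        _ ≤ (I * B) ^ 2 := s1
        _ = I ^ 2 * B ^ 2 := by ring
        _ ≤ I ^ 2 * (A2 * A4) := s2
    have step4 : A2 ^ 3 ≤ I ^ 2 * A4 := by
      have h' : A2 * A2 ^ 3 ≤ A2 * (I ^ 2 * A4) := by nlinarith [step3]
      exact le_of_mul_le_mul_left h' hA2pos
    have step5 : I ^ 2 * A4 ≤ I ^ 2 * (3 * (α ^ 2 / 6) ^ 2 * K ^ 2) :=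
      mul_le_mul_of_nonneg_left hA4v (sq_nonneg I)
    have hIsq : α ^ 2 * K / 18 ≤ I ^ 2 := by
      have hfin : A2 ^ 3 ≤ I ^ 2 * (3 * (α ^ 2 / 6) ^ 2 * K ^ 2) := le_trans step4 step5
      rw [hA2v] at hfin
      have e1 : (α ^ 2 / 6 * K) ^ 3 = α ^ 6 * K ^ 3 / 216 := by ring
      have e2 : I ^ 2 * (3 * (α ^ 2 / 6) ^ 2 * K ^ 2) = I ^ 2 * (α ^ 4 * K ^ 2 / 12) := by ring
      rw [e1, e2] at hfin
      have hpos : 0 < α ^ 4 * K ^ 2 / 12 := by positivity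
      have hdiv : α ^ 6 * K ^ 3 / 216 / (α ^ 4 * K ^ 2 / 12) ≤ I ^ 2 := by
        rw [div_le_iff₀ hpos]
        exact hfin
      have heq : α ^ 6 * K ^ 3 / 216 / (α ^ 4 * K ^ 2 / 12) = α ^ 2 * K / 18 := by
        have hαne : α ≠ 0 := hα.ne'
        have hKne : K ≠ 0 := hKpos.ne'
        field_simp
        ring
      rw [heq] at hdiv
      exact hdiv
    have hsK : Real.sqrt K ^ 2 = K := Real.sq_sqrt hK0
    have hL0 : 0 ≤ 1 / 5 * α * Real.sqrt K :=
      mul_nonneg (mul_nonneg (by norm_num) hα.le) (Real.sqrt_nonneg _)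
    have hfinal : (1 / 5 * α * Real.sqrt K) ^ 2 ≤ I ^ 2 := by
      have heq : (1 / 5 * α * Real.sqrt K) ^ 2 = α ^ 2 * K / 25 := by
        rw [mul_pow, mul_pow, hsK]; ring
      rw [heq]
      have hq : 0 < α ^ 2 * K := by positivity
      linarith [hIsq]
    calc 1 / 5 * α * Real.sqrt K = Real.sqrt ((1 / 5 * α * Real.sqrt K) ^ 2) :=
          (Real.sqrt_sq hL0).symm
      _ ≤ Real.sqrt (I ^ 2) := Real.sqrt_le_sqrt hfinal
      _ = I := Real.sqrt_sq hI0
end
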